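/- arXiv:2602.22184 — 6 statements merged into one kernel-verified Lean document; each statement's English description precedes it below -/
import Mathlib

section
/- For parameters θ₁,...,θ_m > 0 and q₁,...,q_m ∈ (0,1), the quantities P(α₁,...,α_m) = θ₁^{α₁}⋯θ_m^{α_m} · (∑ over pairwise disjoint finite sets J₁,...,J_m ⊆ ℕ with |J_k| = α_k of ∏_{k=1}^m q_k^{∑_{j∈J_k} j}) / ∏_{j=0}^∞ (1 + ∑_{k=1}^m θ_k q_k^j) sum to 1 over all (α₁,...,α_m) ∈ ℕ^m, i.e., they define a probability mass function on ℕ^m. -/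
open scoped BigOperators

/-- The normalizing infinite product `∏_{j=0}^∞ (1 + ∑_{k=1}^m θ_k q_k^j)`. -/
noncomputable def heineDenom (m : ℕ) (θ q : Fin m → ℝ) : ℝ :=
  ∏' j : ℕ, (1 + ∑ k, θ k * q k ^ j)

/-- The sum over pairwise disjoint finite sets `J₁,…,J_m ⊆ ℕ` with `|J_k| = α_k`
of `∏_k q_k ^ (∑_{j ∈ J_k} j)`. -/
noncomputable def heineCoeff (m : ℕ) (q : Fin m → ℝ) (α : Fin m → ℕ) : ℝ :=
  ∑' J : Fin m → Finset ℕ,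
    if (∀ k, (J k).card = α k) ∧ (∀ k l, k ≠ l → Disjoint (J k) (J l)) then
      ∏ k, q k ^ (∑ j ∈ J k, j)
    else 0

/-- The multi-dimensional Heine probability mass function. -/
noncomputable def heinePMF (m : ℕ) (θ q : Fin m → ℝ) (α : Fin m → ℕ) : ℝ :=
  (∏ k, θ k ^ α k) * heineCoeff m q α / heineDenom m θ q

section HeineAux

variable {m : ℕ} (θ q : Fin m → ℝ)

/-- Per-site weights: index `0` gives `1`, index `k.succ` gives `θ k * q k ^ j`. -/
noncomputable def hg (j : ℕ) : Fin (m + 1) → ℝ :=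
  Fin.cons 1 (fun k => θ k * q k ^ j)

/-- The weight of a finitely supported configuration. -/
noncomputable def hG (F : ℕ →₀ Fin (m + 1)) : ℝ :=
  ∏ j ∈ F.support, hg θ q j (F j)

lemma hg_zero (j : ℕ) : hg θ q j 0 = 1 := rfl

lemma hg_succ (j : ℕ) (k : Fin m) : hg θ q j k.succ = θ k * q k ^ j := by
  simp [hg]

variable {θ q}

lemma hg_nonneg (hθ : ∀ k, 0 < θ k) (hq : ∀ k, q k ∈ Set.Ioo (0 : ℝ) 1)
    (j : ℕ) (i : Fin (m + 1)) : 0 ≤ hg θ q j i := by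
  induction i using Fin.cases with
  | zero => rw [hg_zero]; norm_num
  | succ k =>
    rw [hg_succ]
    exact mul_nonneg (hθ k).le (pow_nonneg (hq k).1.le j)

lemma hG_nonneg (hθ : ∀ k, 0 < θ k) (hq : ∀ k, q k ∈ Set.Ioo (0 : ℝ) 1)
    (F : ℕ →₀ Fin (m + 1)) : 0 ≤ hG θ q F :=
  Finset.prod_nonneg fun j _ => hg_nonneg hθ hq j (F j)

variable (θ q)

/-- The fibers of a configuration. -/
def hPhi (F : ℕ →₀ Fin (m + 1)) (k : Fin m) : Finset ℕ :=
  F.support.filter (fun j => F j = k.succ)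

lemma mem_hPhi {F : ℕ →₀ Fin (m + 1)} {k : Fin m} {j : ℕ} :
    j ∈ hPhi F k ↔ F j = k.succ := by
  constructor
  · intro h
    exact (Finset.mem_filter.1 h).2
  · intro h
    refine Finset.mem_filter.2 ⟨Finsupp.mem_support_iff.2 ?_, h⟩
    rw [h]
    exact Fin.succ_ne_zero k

lemma hPhi_inj : Function.Injective (hPhi (m := m)) := by
  intro F F' h
  ext j
  have key : ∀ k : Fin m, F j = k.succ ↔ F' j = k.succ := fun k => by
    rw [← mem_hPhi, ← mem_hPhi, h]
  rcases Fin.eq_zero_or_eq_succ (F j) with h0 | ⟨k, hk⟩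
  · rcases Fin.eq_zero_or_eq_succ (F' j) with h0' | ⟨k, hk'⟩
    · rw [h0, h0']
    · have := (key k).2 hk'
      rw [h0] at this
      exact absurd this.symm (Fin.succ_ne_zero k)
  · rw [hk, (key k).1 hk]

lemma hPhi_disj (F : ℕ →₀ Fin (m + 1)) :
    ∀ k l, k ≠ l → Disjoint (hPhi F k) (hPhi F l) := by
  intro k l hkl
  rw [Finset.disjoint_left]
  intro j hk hl
  rw [mem_hPhi] at hk hl
  exact hkl (Fin.succ_inj.1 (hk.symm.trans hl))

lemma support_eq_biUnion (F : ℕ →₀ Fin (m + 1)) :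
    F.support = Finset.univ.biUnion (fun k => hPhi F k) := by
  ext j
  simp only [Finset.mem_biUnion, Finset.mem_univ, true_and, mem_hPhi,
    Finsupp.mem_support_iff]
  constructor
  · intro h
    rcases Fin.eq_zero_or_eq_succ (F j) with h0 | ⟨k, hk⟩
    · exact absurd h0 h
    · exact ⟨k, hk⟩
  · rintro ⟨k, hk⟩
    rw [hk]
    exact Fin.succ_ne_zero k

lemma hG_eq (F : ℕ →₀ Fin (m + 1)) :
    hG θ q F = (∏ k, θ k ^ (hPhi F k).card) * ∏ k, q k ^ (∑ j ∈ hPhi F k, j) := by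
  rw [hG, support_eq_biUnion, Finset.prod_biUnion, ← Finset.prod_mul_distrib]
  · refine Finset.prod_congr rfl fun k _ => ?_
    have h1 : ∀ j ∈ hPhi F k, hg θ q j (F j) = θ k * q k ^ j := fun j hj => by
      rw [mem_hPhi.1 hj, hg_succ]
    rw [Finset.prod_congr rfl h1, Finset.prod_mul_distrib, Finset.prod_const,
      Finset.prod_pow_eq_pow_sum]
  · intro k _ l _ hkl
    exact hPhi_disj F k l hkl

lemma exists_hPhi_eq (J : Fin m → Finset ℕ)
    (hd : ∀ k l, k ≠ l → Disjoint (J k) (J l)) : ∃ F, hPhi F = J := by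
  classical
  set f : ℕ → Fin (m + 1) := fun j => if h : ∃ k, j ∈ J k then (h.choose).succ else 0
    with hf
  refine ⟨Finsupp.onFinset (Finset.univ.biUnion J) f ?_, ?_⟩
  · intro j hj
    by_contra hmem
    apply hj
    rw [hf]
    simp only
    rw [dif_neg]
    rintro ⟨k, hk⟩
    exact hmem (Finset.mem_biUnion.2 ⟨k, Finset.mem_univ k, hk⟩)
  · funext k
    ext j
    rw [mem_hPhi, Finsupp.onFinset_apply]
    constructor
    · intro h
      by_cases hex : ∃ k', j ∈ J k'
      · rw [hf] at h
        simp only at h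
        rw [dif_pos hex] at h
        have h2 := hex.choose_spec
        rwa [Fin.succ_inj.1 h] at h2
      · rw [hf] at h
        simp only at h
        rw [dif_neg hex] at h
        exact absurd h.symm (Fin.succ_ne_zero k)
    · intro hj
      have hex : ∃ k', j ∈ J k' := ⟨k, hj⟩
      have hck : hex.choose = k := by
        by_contra hne
        exact (Finset.disjoint_left.mp (hd _ _ hne) hex.choose_spec) hj
      rw [hf]
      simp only
      rw [dif_pos hex, hck]

lemma sum_finsupp_eq_prod (s : Finset ℕ) :
    ∑ F ∈ s.finsupp (fun _ => (Finset.univ : Finset (Fin (m + 1)))), hG θ q F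
      = ∏ j ∈ s, (1 + ∑ k, θ k * q k ^ j) := by
  classical
  have h1 : ∀ j ∈ s, (1 + ∑ k, θ k * q k ^ j) = ∑ i, hg θ q j i := fun j _ => by
    rw [hg, Fin.sum_cons]
  rw [Finset.prod_congr rfl h1, Finset.prod_sum]
  simp only [Finset.finsupp, Finset.sum_map, Function.Embedding.coeFn_mk]
  refine Finset.sum_congr ?_ fun p _ => ?_
  · congr
    exact Subsingleton.elim _ _
  have : hG θ q (Finsupp.indicator s p) = (Finsupp.indicator s p).prod
      (fun j i => hg θ q j i) := rfl
  rw [this, Finsupp.prod_indicator_index_eq_prod_attach]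
  intro a _
  exact hg_zero θ q a

variable {θ q}

lemma summable_a (hθ : ∀ k, 0 < θ k) (hq : ∀ k, q k ∈ Set.Ioo (0 : ℝ) 1) :
    Summable (fun j : ℕ => ∑ k, θ k * q k ^ j) := by
  apply summable_sum
  intro k _
  exact (summable_geometric_of_lt_one (hq k).1.le (hq k).2).mul_left (θ k)

lemma partial_prod_le (hθ : ∀ k, 0 < θ k) (hq : ∀ k, q k ∈ Set.Ioo (0 : ℝ) 1)
    (s : Finset ℕ) :
    ∏ j ∈ s, (1 + ∑ k, θ k * q k ^ j)
      ≤ Real.exp (∑' j : ℕ, ∑ k, θ k * q k ^ j) := by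
  have ha : ∀ j : ℕ, 0 ≤ ∑ k, θ k * q k ^ j := fun j =>
    Finset.sum_nonneg fun k _ => mul_nonneg (hθ k).le (pow_nonneg (hq k).1.le j)
  calc ∏ j ∈ s, (1 + ∑ k, θ k * q k ^ j)
      ≤ ∏ j ∈ s, Real.exp (∑ k, θ k * q k ^ j) := by
        apply Finset.prod_le_prod
        · intro j _
          have := ha j
          linarith
        · intro j _
          rw [add_comm]
          exact Real.add_one_le_exp _
    _ = Real.exp (∑ j ∈ s, ∑ k, θ k * q k ^ j) := (Real.exp_sum s _).symm
    _ ≤ Real.exp (∑' j : ℕ, ∑ k, θ k * q k ^ j) := by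
        apply Real.exp_le_exp.2
        exact Summable.sum_le_tsum s (fun j _ => ha j) (summable_a hθ hq)

lemma sum_hG_le (hθ : ∀ k, 0 < θ k) (hq : ∀ k, q k ∈ Set.Ioo (0 : ℝ) 1)
    (u : Finset (ℕ →₀ Fin (m + 1))) :
    ∑ F ∈ u, hG θ q F ≤ Real.exp (∑' j : ℕ, ∑ k, θ k * q k ^ j) := by
  classical
  set s := u.sup Finsupp.support with hs
  have hu : u ⊆ s.finsupp (fun _ => (Finset.univ : Finset (Fin (m + 1)))) := by
    intro F hF
    exact Finset.mem_finsupp_iff.2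
      ⟨Finset.le_sup hF, fun i _ => Finset.mem_univ _⟩
  calc ∑ F ∈ u, hG θ q F
      ≤ ∑ F ∈ s.finsupp (fun _ => (Finset.univ : Finset (Fin (m + 1)))), hG θ q F :=
        Finset.sum_le_sum_of_subset_of_nonneg hu fun F _ _ => hG_nonneg hθ hq F
    _ = ∏ j ∈ s, (1 + ∑ k, θ k * q k ^ j) := sum_finsupp_eq_prod θ q s
    _ ≤ _ := partial_prod_le hθ hq s

lemma hG_summable (hθ : ∀ k, 0 < θ k) (hq : ∀ k, q k ∈ Set.Ioo (0 : ℝ) 1) :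
    Summable (hG θ q) :=
  summable_of_sum_le (fun F => hG_nonneg hθ hq F) (sum_hG_le hθ hq)

lemma hasProd_hG (hθ : ∀ k, 0 < θ k) (hq : ∀ k, q k ∈ Set.Ioo (0 : ℝ) 1) :
    HasProd (fun j : ℕ => 1 + ∑ k, θ k * q k ^ j) (∑' F, hG θ q F) := by
  rw [HasProd]
  have h1 : Filter.Tendsto
      (fun s : Finset ℕ => s.finsupp (fun _ => (Finset.univ : Finset (Fin (m + 1)))))
      Filter.atTop Filter.atTop := by
    apply Filter.tendsto_atTop_atTop.2
    intro E
    refine ⟨E.sup Finsupp.support, fun s hs F hF => ?_⟩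
    exact Finset.mem_finsupp_iff.2
      ⟨(Finset.le_sup hF).trans hs, fun i _ => Finset.mem_univ _⟩
  have h2 := ((hG_summable hθ hq).hasSum).comp h1
  exact h2.congr fun s => sum_finsupp_eq_prod θ q s

lemma heineDenom_eq (hθ : ∀ k, 0 < θ k) (hq : ∀ k, q k ∈ Set.Ioo (0 : ℝ) 1) :
    heineDenom m θ q = ∑' F, hG θ q F :=
  (hasProd_hG hθ hq).tprod_eq

lemma one_le_tsum_hG (hθ : ∀ k, 0 < θ k) (hq : ∀ k, q k ∈ Set.Ioo (0 : ℝ) 1) :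
    (1 : ℝ) ≤ ∑' F, hG θ q F := by
  have h0 : hG θ q 0 = 1 := by simp [hG]
  have := Summable.le_tsum (hG_summable hθ hq) 0 (fun F _ => hG_nonneg hθ hq F)
  rwa [h0] at this

variable (θ q)

/-- The summand over pairs `(α, J)`. -/
noncomputable def hH : (Fin m → ℕ) × (Fin m → Finset ℕ) → ℝ := fun p =>
  if (∀ k, (p.2 k).card = p.1 k) ∧ (∀ k l, k ≠ l → Disjoint (p.2 k) (p.2 l)) then
    (∏ k, θ k ^ p.1 k) * ∏ k, q k ^ (∑ j ∈ p.2 k, j)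
  else 0

/-- The injection from configurations to pairs `(α, J)`. -/
def hIota (F : ℕ →₀ Fin (m + 1)) : (Fin m → ℕ) × (Fin m → Finset ℕ) :=
  (fun k => (hPhi F k).card, hPhi F)

lemma hIota_inj : Function.Injective (hIota (m := m)) := fun F F' h =>
  hPhi_inj (congrArg Prod.snd h)

lemma hH_comp (F : ℕ →₀ Fin (m + 1)) : hH θ q (hIota F) = hG θ q F := by
  rw [hH, hIota, if_pos ⟨fun k => rfl, hPhi_disj F⟩]
  exact (hG_eq θ q F).symm

lemma hH_support : Function.support (hH θ q) ⊆ Set.range (hIota (m := m)) := by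
  rintro ⟨α, J⟩ hp
  rw [Function.mem_support, hH] at hp
  by_cases hc : (∀ k, (J k).card = α k) ∧ (∀ k l, k ≠ l → Disjoint (J k) (J l))
  · obtain ⟨F, hF⟩ := exists_hPhi_eq J hc.2
    refine ⟨F, ?_⟩
    rw [hIota, hF]
    refine Prod.ext ?_ rfl
    funext k
    exact hc.1 k
  · exact absurd (if_neg hc) hp

variable {θ q}

lemma hH_zero_off_range :
    ∀ p ∉ Set.range (hIota (m := m)), hH θ q p = 0 := fun p hp => by
  by_contra h
  exact hp (hH_support θ q h)

lemma tsum_hH_eq (hθ : ∀ k, 0 < θ k) (hq : ∀ k, q k ∈ Set.Ioo (0 : ℝ) 1) :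
    ∑' p, hH θ q p = ∑' F, hG θ q F := by
  rw [← Function.Injective.tsum_eq hIota_inj (hH_support θ q)]
  exact tsum_congr fun F => hH_comp θ q F

lemma hH_summable (hθ : ∀ k, 0 < θ k) (hq : ∀ k, q k ∈ Set.Ioo (0 : ℝ) 1) :
    Summable (hH θ q) := by
  rw [← Function.Injective.summable_iff hIota_inj (hH_zero_off_range)]
  have : (hH θ q) ∘ (hIota (m := m)) = hG θ q := funext fun F => hH_comp θ q F
  rw [this]
  exact hG_summable hθ hq

lemma tsum_hH_slice (α : Fin m → ℕ) :
    ∑' J : Fin m → Finset ℕ, hH θ q (α, J)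
      = (∏ k, θ k ^ α k) * heineCoeff m q α := by
  rw [heineCoeff, ← tsum_mul_left]
  exact tsum_congr fun J => by simp only [hH, mul_ite, mul_zero]

end HeineAux

/-- The multi-dimensional Heine weights sum to 1 over `ℕ^m`. -/
theorem heinePMF_tsum_eq_one (m : ℕ) (hm : 0 < m) (θ q : Fin m → ℝ)
    (hθ : ∀ k, 0 < θ k) (hq : ∀ k, q k ∈ Set.Ioo (0 : ℝ) 1) :
    ∑' α : Fin m → ℕ, heinePMF m θ q α = 1 := by
  have hD : heineDenom m θ q = ∑' F, hG θ q F := heineDenom_eq hθ hq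
  have hDne : heineDenom m θ q ≠ 0 := by
    rw [hD]
    have := one_le_tsum_hG hθ hq
    linarith
  have hnum : ∑' α : Fin m → ℕ, (∏ k, θ k ^ α k) * heineCoeff m q α
      = heineDenom m θ q := by
    have h1 : ∑' p, hH θ q p
        = ∑' α : Fin m → ℕ, ∑' J : Fin m → Finset ℕ, hH θ q (α, J) :=
      Summable.tsum_prod' (hH_summable hθ hq) fun α => (hH_summable hθ hq).prod_factor α
    calc ∑' α : Fin m → ℕ, (∏ k, θ k ^ α k) * heineCoeff m q α
        = ∑' α : Fin m → ℕ, ∑' J : Fin m → Finset ℕ, hH θ q (α, J) :=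
          tsum_congr fun α => (tsum_hH_slice α).symm
      _ = ∑' p, hH θ q p := h1.symm
      _ = ∑' F, hG θ q F := tsum_hH_eq hθ hq
      _ = heineDenom m θ q := hD.symm
  calc ∑' α : Fin m → ℕ, heinePMF m θ q α
      = (∑' α : Fin m → ℕ, (∏ k, θ k ^ α k) * heineCoeff m q α) / heineDenom m θ q := by
        rw [← tsum_div_const]
        rfl
    _ = heineDenom m θ q / heineDenom m θ q := by rw [hnum]
    _ = 1 := div_self hDne
end

section
/- With Y_j and X_k as above, the joint distribution of (X₁,...,X_m) is the multi-dimensional Heine distribution: for all (α₁,...,α_m) ∈ ℕ^m, P(X₁ = α₁,...,X_m = α_m) = θ₁^{α₁}⋯θ_m^{α_m} · (∑ over pairwise disjoint J₁,...,J_m ⊆ ℕ with |J_k| = α_k of ∏_{k=1}^m q_k^{∑_{j∈J_k} j}) / ∏_{j=0}^∞ (1 + ∑_{ℓ=1}^m θ_ℓ q_ℓ^j). -/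
open scoped BigOperators
open MeasureTheory ProbabilityTheory

open Filter Topology

private lemma heine_multipliable {S : ℕ → ℝ} (hS0 : ∀ j, 0 < S j) (hsum : Summable S) :
    Multipliable (fun j => 1 + S j) := by
  have hlog : Summable (fun j => Real.log (1 + S j)) := by
    apply Summable.of_nonneg_of_le (fun j => Real.log_nonneg (by linarith [hS0 j])) _ hsum
    intro j
    have := Real.log_le_sub_one_of_pos (x := 1 + S j) (by linarith [hS0 j])
    linarith
  exact Real.multipliable_of_summable_log (fun j => by linarith [hS0 j]) hlog

/-- With `X_k = #{j : Y_j = k}` for independent `Y_j` distributed as in the text,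
the joint distribution of `(X₁,…,X_m)` is the multi-dimensional Heine distribution. -/
theorem heine_joint_distribution
    {Ω : Type*} [MeasurableSpace Ω] (μ : Measure Ω) [IsProbabilityMeasure μ]
    (m : ℕ) (hm : 0 < m) (θ q : Fin m → ℝ)
    (hθ : ∀ k, 0 < θ k) (hq : ∀ k, q k ∈ Set.Ioo (0 : ℝ) 1)
    (Y : ℕ → Ω → Fin (m + 1))
    (hmeas : ∀ j, Measurable (Y j))
    (hindep : iIndepFun Y μ)
    (hY0 : ∀ j, μ {ω | Y j ω = 0}
      = ENNReal.ofReal (1 / (1 + ∑ l, θ l * q l ^ j)))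
    (hYk : ∀ j, ∀ k : Fin m, μ {ω | Y j ω = k.succ}
      = ENNReal.ofReal (θ k * q k ^ j / (1 + ∑ l, θ l * q l ^ j)))
    (α : Fin m → ℕ) :
    μ {ω | ∀ k : Fin m, ({j : ℕ | Y j ω = k.succ}).Finite ∧
        Nat.card {j : ℕ | Y j ω = k.succ} = α k}
      = ENNReal.ofReal (heinePMF m θ q α) := by
  classical
  haveI : Nonempty (Fin m) := ⟨⟨0, hm⟩⟩
  set S : ℕ → ℝ := fun j => ∑ l, θ l * q l ^ j with hSdef
  have hS0 : ∀ j, 0 < S j := fun j =>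
    Finset.sum_pos (fun l _ => mul_pos (hθ l) (pow_pos (hq l).1 j)) Finset.univ_nonempty
  have hD0 : ∀ j, (0:ℝ) < 1 + S j := fun j => by linarith [hS0 j]
  have hSsum : Summable S := by
    apply summable_sum
    intro l _
    exact (summable_geometric_of_lt_one (hq l).1.le (hq l).2).mul_left _
  have hmulti : Multipliable (fun j => 1 + S j) := heine_multipliable hS0 hSsum
  have hDenom : heineDenom m θ q = ∏' j, (1 + S j) := rfl
  have hDlim : Tendsto (fun n => ∏ j ∈ Finset.range n, (1 + S j)) atTop
      (𝓝 (heineDenom m θ q)) := by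
    rw [hDenom]; exact hmulti.hasProd.tendsto_prod_nat
  have hDpos : 0 < heineDenom m θ q := by
    have h1 : (1:ℝ) ≤ heineDenom m θ q := by
      apply ge_of_tendsto hDlim
      filter_upwards with n
      calc (1:ℝ) = ∏ _j ∈ Finset.range n, 1 := by simp
        _ ≤ ∏ j ∈ Finset.range n, (1 + S j) :=
          Finset.prod_le_prod (fun j _ => zero_le_one) (fun j _ => by linarith [hS0 j])
    linarith
  -- pointwise probabilities
  set p : ℕ → Fin (m+1) → ℝ :=
    fun j v => Fin.cases (1 / (1 + S j)) (fun k => θ k * q k ^ j / (1 + S j)) v with hpdef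
  have hp_nonneg : ∀ j v, 0 ≤ p j v := by
    intro j v
    induction v using Fin.cases with
    | zero =>
        simp only [hpdef, Fin.cases_zero]
        exact div_nonneg zero_le_one (hD0 j).le
    | succ k =>
        simp only [hpdef, Fin.cases_succ]
        exact div_nonneg (mul_nonneg (hθ k).le (pow_nonneg (hq k).1.le j)) (hD0 j).le
  have hpY : ∀ j v, μ (Y j ⁻¹' {v}) = ENNReal.ofReal (p j v) := by
    intro j v
    induction v using Fin.cases with
    | zero => simp only [hpdef, Fin.cases_zero]; exact hY0 j
    | succ k => simp only [hpdef, Fin.cases_succ]; exact hYk j k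
  -- validity predicate and labelling function
  set V : (Fin m → Finset ℕ) → Prop :=
    fun J => (∀ k, (J k).card = α k) ∧ (∀ k l, k ≠ l → Disjoint (J k) (J l)) with hVdef
  set F : (Fin m → Finset ℕ) → ℕ → Fin (m+1) :=
    fun J j => if h : ∃ k, j ∈ J k then (Classical.choose h).succ else 0 with hFdef
  have hF_mem : ∀ J, V J → ∀ k j, j ∈ J k → F J j = k.succ := by
    intro J hJ k j hjk
    have hex : ∃ k', j ∈ J k' := ⟨k, hjk⟩
    simp only [hFdef, dif_pos hex]
    congr 1
    by_contra hne
    exact (Finset.disjoint_left.mp (hJ.2 _ _ hne) (Classical.choose_spec hex)) hjk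
  have hF_not : ∀ J j, (∀ k, j ∉ J k) → F J j = 0 := by
    intro J j hj
    simp only [hFdef]
    rw [dif_neg]
    rintro ⟨k, hk⟩
    exact hj k hk
  -- the elementary events
  set E : (Fin m → Finset ℕ) → Set Ω := fun J => ⋂ j, Y j ⁻¹' {F J j} with hEdef
  have hEmeas : ∀ J, MeasurableSet (E J) :=
    fun J => MeasurableSet.iInter fun j => hmeas j (measurableSet_singleton _)
  have hkey : ∀ J, V J → ∀ ω, ω ∈ E J → ∀ k, {j | Y j ω = k.succ} = ↑(J k) := by
    intro J hJ ω hω k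
    ext j
    have hYj : Y j ω = F J j := Set.mem_iInter.mp hω j
    simp only [Set.mem_setOf_eq, Finset.mem_coe]
    constructor
    · intro h
      by_contra hjk
      rcases em (∃ k', j ∈ J k') with ⟨k', hk'⟩ | hne
      · have hF := hF_mem J hJ k' j hk'
        rw [hYj, hF] at h
        exact hjk ((Fin.succ_injective _ h) ▸ hk')
      · have hF := hF_not J j (fun k0 hk0 => hne ⟨k0, hk0⟩)
        rw [hYj, hF] at h
        exact (Fin.succ_ne_zero k) h.symm
    · intro h
      rw [hYj, hF_mem J hJ k j h]
  -- events with invalid configurations replaced by ∅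
  set E' : (Fin m → Finset ℕ) → Set Ω := fun J => if V J then E J else ∅ with hE'def
  have hE'meas : ∀ J, MeasurableSet (E' J) := by
    intro J
    by_cases hJ : V J
    · rw [hE'def]; simp only [if_pos hJ]; exact hEmeas J
    · rw [hE'def]; simp only [if_neg hJ]; exact MeasurableSet.empty
  -- the event in question is the disjoint union of the E' J
  have hevent : {ω | ∀ k : Fin m, ({j : ℕ | Y j ω = k.succ}).Finite ∧
        Nat.card {j : ℕ | Y j ω = k.succ} = α k} = ⋃ J, E' J := by
    ext ω
    simp only [Set.mem_setOf_eq, Set.mem_iUnion]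
    constructor
    · intro h
      set J : Fin m → Finset ℕ := fun k => (h k).1.toFinset with hJdef
      have hJmem : ∀ k j, j ∈ J k ↔ Y j ω = k.succ := by
        intro k j
        rw [hJdef]
        simp [Set.Finite.mem_toFinset]
      have hVJ : V J := by
        rw [hVdef]
        constructor
        · intro k
          rw [← (h k).2, hJdef]
          rw [Nat.card_coe_set_eq, Set.ncard_eq_toFinset_card _ (h k).1]
        · intro k l hkl
          rw [Finset.disjoint_left]
          intro j hjk hjl
          rw [hJmem] at hjk hjl
          exact hkl (Fin.succ_injective _ (hjk ▸ hjl))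
      refine ⟨J, ?_⟩
      rw [hE'def]
      simp only [if_pos hVJ]
      rw [hEdef]
      simp only [Set.mem_iInter]
      intro j
      show Y j ω = F J j
      rcases Fin.eq_zero_or_eq_succ (Y j ω) with h0 | ⟨k, hk⟩
      · rw [h0, hF_not J j]
        intro k hk
        rw [hJmem] at hk
        exact (Fin.succ_ne_zero k) (h0 ▸ hk).symm
      · rw [hk, hF_mem J hVJ k j ((hJmem k j).mpr hk)]
    · rintro ⟨J, hω⟩
      have hVJ : V J := by
        by_contra hJ
        rw [hE'def] at hω
        simp only [if_neg hJ] at hω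
        exact hω
      rw [hE'def] at hω
      simp only [if_pos hVJ] at hω
      intro k
      have hs := hkey J hVJ ω hω k
      rw [hs]
      exact ⟨(J k).finite_toSet,
        by rw [Nat.card_coe_set_eq, Set.ncard_coe_finset]; exact hVJ.1 k⟩
  -- pairwise disjointness
  have hdisjE : Pairwise (Function.onFun Disjoint E') := by
    intro J J' hne
    rw [Function.onFun]
    by_cases hJ : V J
    · by_cases hJ' : V J'
      · rw [hE'def]
        simp only [if_pos hJ, if_pos hJ']
        rw [Set.disjoint_left]
        intro ω hω hω'
        apply hne
        funext k
        apply Finset.coe_injective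
        rw [← hkey J hJ ω hω k, ← hkey J' hJ' ω hω' k]
      · rw [hE'def]; simp only [if_neg hJ']; exact disjoint_bot_right
    · rw [hE'def]; simp only [if_neg hJ]; exact disjoint_bot_left
  -- measure of a finite intersection via independence
  have hfinprod : ∀ (J : Fin m → Finset ℕ) (n : ℕ),
      μ (⋂ j ∈ Finset.range n, Y j ⁻¹' {F J j})
        = ENNReal.ofReal (∏ j ∈ Finset.range n, p j (F J j)) := by
    intro J n
    rw [hindep.measure_inter_preimage_eq_mul (Finset.range n)
      (sets := fun j => {F J j}) (fun i _ => measurableSet_singleton _)]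
    rw [ENNReal.ofReal_prod_of_nonneg (fun j _ => hp_nonneg j _)]
    exact Finset.prod_congr rfl fun j _ => hpY j (F J j)
  -- measure of each elementary event
  have hμE : ∀ J, V J → μ (E J)
      = ENNReal.ofReal ((∏ k, θ k ^ α k) * (∏ k, q k ^ (∑ j ∈ J k, j)) / heineDenom m θ q) := by
    intro J hJ
    set N : ℕ := ((Finset.univ.biUnion J).sup id) + 1 with hNdef
    have hsubset : ∀ n, N ≤ n → Finset.univ.biUnion J ⊆ Finset.range n := by
      intro n hn j hj
      rw [Finset.mem_range]
      have h1 : j ≤ (Finset.univ.biUnion J).sup id := Finset.le_sup (f := id) hj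
      omega
    have hps : ∀ j, p j (F J j)
        = (Fin.cases 1 (fun k => θ k * q k ^ j) (F J j) : ℝ) / (1 + S j) := by
      intro j
      rcases Fin.eq_zero_or_eq_succ (F J j) with h | ⟨k, h⟩ <;>
        rw [h] <;> simp [hpdef]
    have hnum : ∀ n, N ≤ n → ∏ j ∈ Finset.range n, p j (F J j)
        = ((∏ k, θ k ^ α k) * ∏ k, q k ^ (∑ j ∈ J k, j)) / ∏ j ∈ Finset.range n, (1 + S j) := by
      intro n hn
      rw [Finset.prod_congr rfl (fun j _ => hps j), Finset.prod_div_distrib]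
      congr 1
      have h1 : ∏ j ∈ Finset.range n, (Fin.cases 1 (fun k => θ k * q k ^ j) (F J j) : ℝ)
          = ∏ j ∈ Finset.univ.biUnion J, (Fin.cases 1 (fun k => θ k * q k ^ j) (F J j) : ℝ) := by
        symm
        apply Finset.prod_subset (hsubset n hn)
        intro j _ hjU
        have hnot : ∀ k, j ∉ J k := by
          intro k hk
          exact hjU (Finset.mem_biUnion.mpr ⟨k, Finset.mem_univ k, hk⟩)
        rw [hF_not J j hnot]
        simp
      rw [h1]
      rw [Finset.prod_biUnion (fun k _ l _ hkl => hJ.2 k l hkl)]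
      have h2 : ∀ k, ∏ j ∈ J k, (Fin.cases 1 (fun k' => θ k' * q k' ^ j) (F J j) : ℝ)
          = θ k ^ α k * q k ^ (∑ j ∈ J k, j) := by
        intro k
        have : ∀ j ∈ J k, (Fin.cases 1 (fun k' => θ k' * q k' ^ j) (F J j) : ℝ)
            = θ k * q k ^ j := by
          intro j hj
          rw [hF_mem J hJ k j hj]
          simp
        rw [Finset.prod_congr rfl this, Finset.prod_mul_distrib, Finset.prod_const,
          hJ.1 k, Finset.prod_pow_eq_pow_sum]
      rw [Finset.prod_congr rfl (fun k _ => h2 k), Finset.prod_mul_distrib]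
    -- continuity from above
    have hEeq : E J = ⋂ n, ⋂ j ∈ Finset.range n, Y j ⁻¹' {F J j} := by
      ext ω
      rw [hEdef]
      simp only [Set.mem_iInter, Finset.mem_range]
      exact ⟨fun h n j _ => h j, fun h j => h (j+1) j (Nat.lt_succ_self j)⟩
    have hB_anti : Antitone (fun n => ⋂ j ∈ Finset.range n, Y j ⁻¹' {F J j}) := by
      intro a b hab ω hω
      simp only [Set.mem_iInter, Finset.mem_range] at *
      exact fun j hj => hω j (lt_of_lt_of_le hj hab)
    have h1 : Tendsto (fun n => μ (⋂ j ∈ Finset.range n, Y j ⁻¹' {F J j})) atTop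
        (𝓝 (μ (E J))) := by
      rw [hEeq]
      exact tendsto_measure_iInter_atTop
        (fun n => ((Finset.range n).measurableSet_biInter
          (fun j _ => hmeas j (measurableSet_singleton _))).nullMeasurableSet)
        hB_anti ⟨0, measure_ne_top μ _⟩
    have h2 : Tendsto (fun n => μ (⋂ j ∈ Finset.range n, Y j ⁻¹' {F J j})) atTop
        (𝓝 (ENNReal.ofReal
          ((∏ k, θ k ^ α k) * (∏ k, q k ^ (∑ j ∈ J k, j)) / heineDenom m θ q))) := by
      have hcont : Tendsto (fun n =>
          ((∏ k, θ k ^ α k) * ∏ k, q k ^ (∑ j ∈ J k, j)) / ∏ j ∈ Finset.range n, (1 + S j))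
          atTop (𝓝 (((∏ k, θ k ^ α k) * ∏ k, q k ^ (∑ j ∈ J k, j)) / heineDenom m θ q)) :=
        tendsto_const_nhds.div hDlim (ne_of_gt hDpos)
      have hoc := (ENNReal.continuous_ofReal.tendsto _).comp hcont
      refine Tendsto.congr' ?_ hoc
      filter_upwards [eventually_ge_atTop N] with n hn
      show ENNReal.ofReal _ = _
      rw [hfinprod J n, hnum n hn]
    exact tendsto_nhds_unique h1 h2
  -- measure of E'
  set g : (Fin m → Finset ℕ) → ℝ :=
    fun J => (∏ k, θ k ^ α k) * (∏ k, q k ^ (∑ j ∈ J k, j)) / heineDenom m θ q with hgdef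
  set h : (Fin m → Finset ℕ) → ℝ := fun J => if V J then g J else 0 with hhdef
  have hg_nonneg : ∀ J, 0 ≤ g J := by
    intro J
    rw [hgdef]
    apply div_nonneg _ hDpos.le
    apply mul_nonneg
    · exact Finset.prod_nonneg fun k _ => pow_nonneg (hθ k).le _
    · exact Finset.prod_nonneg fun k _ => pow_nonneg (hq k).1.le _
  have hh_nonneg : ∀ J, 0 ≤ h J := by
    intro J
    by_cases hJ : V J
    · simp only [hhdef, if_pos hJ]; exact hg_nonneg J
    · simp only [hhdef, if_neg hJ]
      exact le_rfl
  have hμE' : ∀ J, μ (E' J) = ENNReal.ofReal (h J) := by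
    intro J
    by_cases hJ : V J
    · rw [hE'def, hhdef]
      simp only [if_pos hJ]
      exact hμE J hJ
    · rw [hE'def, hhdef]
      simp only [if_neg hJ]
      simp
  -- assemble
  have hmain : μ {ω | ∀ k : Fin m, ({j : ℕ | Y j ω = k.succ}).Finite ∧
        Nat.card {j : ℕ | Y j ω = k.succ} = α k}
      = ∑' J : Fin m → Finset ℕ, ENNReal.ofReal (h J) := by
    rw [hevent, measure_iUnion hdisjE hE'meas]
    exact tsum_congr hμE'
  have htop : (∑' J : Fin m → Finset ℕ, ENNReal.ofReal (h J)) ≠ ⊤ := by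
    rw [← hmain]
    exact measure_ne_top μ _
  have hsummable : Summable h := by
    have := ENNReal.summable_toReal htop
    refine this.congr fun J => ?_
    rw [ENNReal.toReal_ofReal (hh_nonneg J)]
  have hfinal : heinePMF m θ q α = ∑' J, h J := by
    unfold heinePMF heineCoeff
    rw [← tsum_mul_left, ← tsum_div_const]
    apply tsum_congr
    intro J
    by_cases hJ : (∀ k, (J k).card = α k) ∧ (∀ k l, k ≠ l → Disjoint (J k) (J l))
    · have hVJ : V J := by rw [hVdef]; exact hJ
      rw [if_pos hJ, hhdef]
      simp only [if_pos hVJ]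
      rfl
    · have hVJ : ¬ V J := by rw [hVdef]; exact hJ
      rw [if_neg hJ, hhdef]
      simp only [if_neg hVJ]
      simp
  rw [hmain, ← ENNReal.ofReal_tsum_of_nonneg hh_nonneg hsummable, hfinal]
end

section
/- The marginal X_k of the multi-dimensional Heine distribution He(θ₁,...,θ_m; q₁,...,q_m) with m ≥ 2 and all θ_ℓ > 0 is not equal in distribution to any one-dimensional Heine distribution He(θ_k, q_k), unless θ_ℓ = 0 for all ℓ ≠ k; in particular, its generating function ∏_{j=0}^∞ (1 + ∑_{ℓ≠k} θ_ℓ q_ℓ^j + θ_k q_k^j s)/(1 + ∑_ℓ θ_ℓ q_ℓ^j) differs from ∏_{j=0}^∞ (1 + θ_k q_k^j s)/(1 + θ_k q_k^j) whenever some θ_ℓ > 0 with ℓ ≠ k. -/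
open scoped BigOperators

lemma hasProd_exp_log_aux (a : ℕ → ℝ) (ha : ∀ j, 0 < a j)
    (h : Summable fun j => Real.log (a j)) :
    HasProd a (Real.exp (∑' j, Real.log (a j))) := by
  have hs := h.hasSum
  have h2 := (Real.continuous_exp.tendsto _).comp hs
  refine h2.congr fun F => ?_
  rw [Function.comp_apply, Real.exp_sum]
  exact Finset.prod_congr rfl fun j _ => Real.exp_log (ha j)

lemma summable_log_one_add_aux (f : ℕ → ℝ) (hf : ∀ j, 0 ≤ f j) (h : Summable f) :
    Summable fun j => Real.log (1 + f j) := by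
  refine h.of_nonneg_of_le (fun j => Real.log_nonneg (by linarith [hf j])) (fun j => ?_)
  have := Real.log_le_sub_one_of_pos (x := 1 + f j) (by linarith [hf j])
  linarith

/-- For `m ≥ 2` with all `θ_ℓ > 0`, the generating function of the marginal `X_k`
of the multi-dimensional Heine distribution differs from that of the
one-dimensional Heine distribution `He(θ_k, q_k)`: whenever some `θ_l > 0` with
`l ≠ k` (here all `θ` are positive), the two generating functions disagree at
every `s ∈ (0,1)`; in particular the marginal is not `He(θ_k, q_k)`. -/
theorem heine_marginal_not_one_dim (m : ℕ) (hm : 2 ≤ m) (θ q : Fin m → ℝ)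
    (hθ : ∀ k, 0 < θ k) (hq : ∀ k, q k ∈ Set.Ioo (0 : ℝ) 1)
    (k l : Fin m) (hlk : l ≠ k) :
    ∀ s ∈ Set.Ioo (0 : ℝ) 1,
      (∏' j : ℕ,
          (1 + (∑ i ∈ Finset.univ.erase k, θ i * q i ^ j) + θ k * q k ^ j * s)
            / (1 + ∑ i, θ i * q i ^ j))
        ≠ ∏' j : ℕ, (1 + θ k * q k ^ j * s) / (1 + θ k * q k ^ j) := by
  intro s hs
  obtain ⟨hs0, hs1⟩ := hs
  -- basic positivity facts
  have hqpos : ∀ i (j : ℕ), 0 < q i ^ j := fun i j => pow_pos (hq i).1 j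
  have htpos : ∀ j : ℕ, 0 < θ k * q k ^ j := fun j => mul_pos (hθ k) (hqpos k j)
  set E : ℕ → ℝ := fun j => ∑ i ∈ Finset.univ.erase k, θ i * q i ^ j with hE
  have hEpos : ∀ j, 0 < E j := by
    intro j
    refine Finset.sum_pos' (fun i _ => le_of_lt (mul_pos (hθ i) (hqpos i j))) ?_
    exact ⟨l, Finset.mem_erase.2 ⟨hlk, Finset.mem_univ l⟩,
      mul_pos (hθ l) (hqpos l j)⟩
  have hsum_split : ∀ j : ℕ, (∑ i, θ i * q i ^ j) = E j + θ k * q k ^ j := by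
    intro j
    rw [hE, ← Finset.add_sum_erase Finset.univ _ (Finset.mem_univ k)]
    ring
  -- the factor sequences
  set a : ℕ → ℝ := fun j =>
    (1 + E j + θ k * q k ^ j * s) / (1 + ∑ i, θ i * q i ^ j) with ha
  set b : ℕ → ℝ := fun j =>
    (1 + θ k * q k ^ j * s) / (1 + θ k * q k ^ j) with hb
  have hapos : ∀ j, 0 < a j := by
    intro j
    apply div_pos
    · nlinarith [hEpos j, htpos j, mul_pos (htpos j) hs0]
    · rw [hsum_split j]; nlinarith [hEpos j, htpos j]
  have hbpos : ∀ j, 0 < b j := by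
    intro j
    exact div_pos (by nlinarith [mul_pos (htpos j) hs0]) (by nlinarith [htpos j])
  -- a j > b j
  have hab : ∀ j, b j < a j := by
    intro j
    simp only [ha, hb]; rw [hsum_split j]
    have ht := htpos j
    have hEj := hEpos j
    rw [div_lt_div_iff₀ (by nlinarith) (by nlinarith)]
    nlinarith [mul_pos hEj (mul_pos ht (sub_pos.2 hs1))]
  -- summability of the geometric-type sequences
  have hgeom : ∀ i : Fin m, Summable (fun j : ℕ => θ i * q i ^ j) := by
    intro i
    exact (summable_geometric_of_lt_one (le_of_lt (hq i).1) (hq i).2).mul_left (θ i)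
  have hEsum : Summable E := by
    rw [hE]
    exact summable_sum fun i _ => hgeom i
  have hTsum : Summable (fun j : ℕ => θ k * q k ^ j) := hgeom k
  -- summability of logs
  have hloga : Summable fun j => Real.log (a j) := by
    have h1 : Summable fun j => Real.log (1 + (E j + θ k * q k ^ j * s)) := by
      refine summable_log_one_add_aux _ (fun j => ?_) ?_
      · nlinarith [hEpos j, mul_pos (htpos j) hs0]
      · exact hEsum.add (hTsum.mul_right s)
    have h2 : Summable fun j => Real.log (1 + (E j + θ k * q k ^ j)) := by
      refine summable_log_one_add_aux _ (fun j => ?_) (hEsum.add hTsum)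
      nlinarith [hEpos j, htpos j]
    refine (h1.sub h2).congr fun j => ?_
    simp only [ha]
    rw [Real.log_div (by nlinarith [hEpos j, mul_pos (htpos j) hs0])
      (by rw [hsum_split j]; nlinarith [hEpos j, htpos j]), hsum_split j]
    ring_nf
  have hlogb : Summable fun j => Real.log (b j) := by
    have h1 : Summable fun j => Real.log (1 + θ k * q k ^ j * s) :=
      summable_log_one_add_aux _ (fun j => le_of_lt (mul_pos (htpos j) hs0))
        (hTsum.mul_right s)
    have h2 : Summable fun j => Real.log (1 + θ k * q k ^ j) :=
      summable_log_one_add_aux _ (fun j => le_of_lt (htpos j)) hTsum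
    refine (h1.sub h2).congr fun j => ?_
    simp only [hb]; rw [Real.log_div (by nlinarith [mul_pos (htpos j) hs0]) (by nlinarith [htpos j])]
  -- products as exponentials
  have hPa := hasProd_exp_log_aux a hapos hloga
  have hPb := hasProd_exp_log_aux b hbpos hlogb
  rw [hPa.tprod_eq, hPb.tprod_eq]
  have hlt : (∑' j, Real.log (b j)) < ∑' j, Real.log (a j) := by
    refine Summable.tsum_lt_tsum (i := 0) (fun j => Real.log_le_log (hbpos j) (le_of_lt (hab j)))
      (Real.log_lt_log (hbpos 0) (hab 0)) hlogb hloga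
  exact ne_of_gt (Real.exp_lt_exp.2 hlt)
end

section
/- Let (X₁,...,X_m) ∼ He(θ₁,...,θ_m; q₁,...,q_m) realized via independent Y_j as above. Then for p ≠ q in {1,...,m}, Cov(X_p, X_q) = −∑_{j=0}^∞ θ_p θ_q (q_p q_q)^j/(1 + ∑_{k=1}^m θ_k q_k^j)². In particular, distinct coordinates are negatively correlated. -/
open scoped BigOperators
open MeasureTheory ProbabilityTheory
open scoped ENNReal NNReal

private lemma tsum_ite_real_eq_toReal (P : ℕ → Prop) [DecidablePred P] :
    (∑' j, if P j then (1 : ℝ) else 0)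
      = (∑' j, if P j then (1 : ℝ≥0∞) else 0).toReal := by
  by_cases h : Summable (fun j => if P j then (1 : ℝ) else 0)
  · have h1 : ENNReal.ofReal (∑' j, if P j then (1 : ℝ) else 0)
        = ∑' j, if P j then (1 : ℝ≥0∞) else 0 := by
      rw [ENNReal.ofReal_tsum_of_nonneg (fun j => by positivity) h]
      refine tsum_congr fun j => ?_
      split <;> simp
    rw [← h1, ENNReal.toReal_ofReal (tsum_nonneg fun j => by positivity)]
  · rw [tsum_eq_zero_of_not_summable h]
    have h2 : (∑' j, if P j then (1 : ℝ≥0∞) else 0) = ∞ := by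
      by_contra htop
      have he : (fun j => if P j then (1 : ℝ≥0∞) else 0)
          = fun j => ((if P j then (1 : ℝ≥0) else 0 : ℝ≥0) : ℝ≥0∞) := by
        funext j; split <;> simp
      rw [he] at htop
      have hs : Summable (fun j => if P j then (1 : ℝ≥0) else 0) :=
        ENNReal.tsum_coe_ne_top_iff_summable.mp htop
      have hs' : Summable (fun j => ((if P j then (1 : ℝ≥0) else 0 : ℝ≥0) : ℝ)) :=
        NNReal.summable_coe.mpr hs
      apply h
      convert hs' using 1
      funext j; split <;> simp
    rw [h2, ENNReal.toReal_top]

/-- For the multi-dimensional Heine distribution realized via independent `Y_j`,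
for `p ≠ q'`,
`Cov(X_p, X_q') = −∑_{j=0}^∞ θ_p θ_q' (q_p q_q')^j/(1 + ∑_k θ_k q_k^j)²`;
in particular, distinct coordinates are negatively correlated. -/
theorem heine_marginal_covariance
    {Ω : Type*} [MeasurableSpace Ω] (μ : Measure Ω) [IsProbabilityMeasure μ]
    (m : ℕ) (hm : 0 < m) (θ q : Fin m → ℝ)
    (hθ : ∀ k, 0 < θ k) (hq : ∀ k, q k ∈ Set.Ioo (0 : ℝ) 1)
    (Y : ℕ → Ω → Fin (m + 1))
    (hmeas : ∀ j, Measurable (Y j))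
    (hindep : iIndepFun Y μ)
    (hY0 : ∀ j, μ {ω | Y j ω = 0}
      = ENNReal.ofReal (1 / (1 + ∑ l, θ l * q l ^ j)))
    (hYk : ∀ j, ∀ k : Fin m, μ {ω | Y j ω = k.succ}
      = ENNReal.ofReal (θ k * q k ^ j / (1 + ∑ l, θ l * q l ^ j)))
    (p p' : Fin m) (hpp' : p ≠ p') :
    (∫ ω, (∑' j : ℕ, if Y j ω = p.succ then (1 : ℝ) else 0)
          * (∑' j : ℕ, if Y j ω = p'.succ then (1 : ℝ) else 0) ∂μ)
      - (∫ ω, (∑' j : ℕ, if Y j ω = p.succ then (1 : ℝ) else 0) ∂μ)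
          * (∫ ω, (∑' j : ℕ, if Y j ω = p'.succ then (1 : ℝ) else 0) ∂μ)
      = -∑' j : ℕ, θ p * θ p' * (q p * q p') ^ j / (1 + ∑ k, θ k * q k ^ j) ^ 2 ∧
    (-∑' j : ℕ, θ p * θ p' * (q p * q p') ^ j / (1 + ∑ k, θ k * q k ^ j) ^ 2 : ℝ) < 0 := by
  classical
  -- basic positivity facts
  have hSnn : ∀ j : ℕ, (0:ℝ) ≤ ∑ l, θ l * q l ^ j := fun j =>
    Finset.sum_nonneg fun l _ => by
      have h1 := (hq l).1; have h2 := hθ l; positivity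
  have hSpos : ∀ j : ℕ, (0:ℝ) < 1 + ∑ l, θ l * q l ^ j := fun j => by linarith [hSnn j]
  have hS1 : ∀ j : ℕ, (1:ℝ) ≤ 1 + ∑ l, θ l * q l ^ j := fun j => by linarith [hSnn j]
  set a : ℕ → ℝ := fun j => θ p * q p ^ j / (1 + ∑ l, θ l * q l ^ j) with ha
  set b : ℕ → ℝ := fun j => θ p' * q p' ^ j / (1 + ∑ l, θ l * q l ^ j) with hb
  have hanonneg : ∀ j, 0 ≤ a j := fun j => by
    rw [ha]
    have h1 := (hq p).1; have h2 := hθ p; have h3 := hSpos j; positivity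
  have hbnonneg : ∀ j, 0 ≤ b j := fun j => by
    rw [hb]
    have h1 := (hq p').1; have h2 := hθ p'; have h3 := hSpos j; positivity
  have hale : ∀ j, a j ≤ θ p * q p ^ j := fun j => by
    rw [ha]
    exact div_le_self (by have h1 := (hq p).1; have h2 := hθ p; positivity) (hS1 j)
  have hble : ∀ j, b j ≤ θ p' * q p' ^ j := fun j => by
    rw [hb]
    exact div_le_self (by have h1 := (hq p').1; have h2 := hθ p'; positivity) (hS1 j)
  have hsuma : Summable a :=
    Summable.of_nonneg_of_le hanonneg hale
      ((summable_geometric_of_lt_one (hq p).1.le (hq p).2).mul_left _)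
  have hsumb : Summable b :=
    Summable.of_nonneg_of_le hbnonneg hble
      ((summable_geometric_of_lt_one (hq p').1.le (hq p').2).mul_left _)
  have hsumab : Summable (fun j => a j * b j) := by
    refine Summable.of_nonneg_of_le (fun j => mul_nonneg (hanonneg j) (hbnonneg j))
      (fun j => ?_) (((summable_geometric_of_lt_one
        (mul_nonneg (hq p).1.le (hq p').1.le)
        (by nlinarith [(hq p).1, (hq p).2, (hq p').1, (hq p').2])).mul_left
        (θ p * θ p')))
    calc a j * b j ≤ (θ p * q p ^ j) * (θ p' * q p' ^ j) :=
          mul_le_mul (hale j) (hble j) (hbnonneg j)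
            (by have h1 := (hq p).1; have h2 := hθ p; positivity)
      _ = θ p * θ p' * (q p * q p') ^ j := by rw [mul_pow]; ring
  -- sets
  set A : ℕ → Set Ω := fun j => Y j ⁻¹' {p.succ} with hA
  set B : ℕ → Set Ω := fun j => Y j ⁻¹' {p'.succ} with hB
  have hAmeas : ∀ j, MeasurableSet (A j) := fun j => (hmeas j) (measurableSet_singleton _)
  have hBmeas : ∀ j, MeasurableSet (B j) := fun j => (hmeas j) (measurableSet_singleton _)
  have hμA : ∀ j, μ (A j) = ENNReal.ofReal (a j) := fun j => by
    rw [hA, ha]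
    exact hYk j p
  have hμB : ∀ j, μ (B j) = ENNReal.ofReal (b j) := fun j => by
    rw [hB, hb]
    exact hYk j p'
  -- ENNReal indicator sums
  set F : Ω → ℝ≥0∞ := fun ω => ∑' j, if Y j ω = p.succ then 1 else 0 with hF
  set G : Ω → ℝ≥0∞ := fun ω => ∑' j, if Y j ω = p'.succ then 1 else 0 with hG
  have hfmeas : ∀ j, Measurable (fun ω => if Y j ω = p.succ then (1:ℝ≥0∞) else 0) :=
    fun j => Measurable.ite (hAmeas j) measurable_const measurable_const
  have hgmeas : ∀ j, Measurable (fun ω => if Y j ω = p'.succ then (1:ℝ≥0∞) else 0) :=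
    fun j => Measurable.ite (hBmeas j) measurable_const measurable_const
  have hFmeas : Measurable F := Measurable.ennreal_tsum hfmeas
  have hGmeas : Measurable G := Measurable.ennreal_tsum hgmeas
  have hlint_f : ∀ j, ∫⁻ ω, (if Y j ω = p.succ then (1:ℝ≥0∞) else 0) ∂μ = μ (A j) := fun j => by
    rw [← lintegral_indicator_one (hAmeas j)]
    refine lintegral_congr fun ω => ?_
    simp [Set.indicator_apply, hA, Set.mem_preimage]
  have hlint_g : ∀ j, ∫⁻ ω, (if Y j ω = p'.succ then (1:ℝ≥0∞) else 0) ∂μ = μ (B j) := fun j => by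
    rw [← lintegral_indicator_one (hBmeas j)]
    refine lintegral_congr fun ω => ?_
    simp [Set.indicator_apply, hB, Set.mem_preimage]
  have hlintF : ∫⁻ ω, F ω ∂μ = ENNReal.ofReal (∑' j, a j) := by
    rw [hF]
    rw [lintegral_tsum (fun j => (hfmeas j).aemeasurable)]
    simp_rw [hlint_f, hμA]
    rw [← ENNReal.ofReal_tsum_of_nonneg hanonneg hsuma]
  have hlintG : ∫⁻ ω, G ω ∂μ = ENNReal.ofReal (∑' j, b j) := by
    rw [hG]
    rw [lintegral_tsum (fun j => (hgmeas j).aemeasurable)]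
    simp_rw [hlint_g, hμB]
    rw [← ENNReal.ofReal_tsum_of_nonneg hbnonneg hsumb]
  -- product as a double sum
  have hFG : ∀ ω, F ω * G ω = ∑' jk : ℕ × ℕ,
      if Y jk.1 ω = p.succ ∧ Y jk.2 ω = p'.succ then (1:ℝ≥0∞) else 0 := by
    intro ω
    rw [ENNReal.tsum_prod']
    rw [hF, hG]
    rw [← ENNReal.tsum_mul_right]
    refine tsum_congr fun j => ?_
    rw [← ENNReal.tsum_mul_left]
    refine tsum_congr fun k => ?_
    split_ifs with h1 h2 h3 <;> simp_all
  have hprod_meas : ∀ jk : ℕ × ℕ, Measurable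
      (fun ω => if Y jk.1 ω = p.succ ∧ Y jk.2 ω = p'.succ then (1:ℝ≥0∞) else 0) := by
    intro jk
    exact Measurable.ite ((hAmeas jk.1).inter (hBmeas jk.2)) measurable_const measurable_const
  have hlint_prod : ∀ jk : ℕ × ℕ,
      ∫⁻ ω, (if Y jk.1 ω = p.succ ∧ Y jk.2 ω = p'.succ then (1:ℝ≥0∞) else 0) ∂μ
        = μ (A jk.1 ∩ B jk.2) := fun jk => by
    rw [← lintegral_indicator_one ((hAmeas jk.1).inter (hBmeas jk.2))]
    refine lintegral_congr fun ω => ?_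
    simp [Set.indicator_apply, hA, hB, Set.mem_preimage, Set.mem_inter_iff]
  -- value of μ (A j ∩ B k)
  have hsucc_ne : (p.succ : Fin (m+1)) ≠ p'.succ := fun h => hpp' (Fin.succ_injective _ h)
  have hcval : ∀ jk : ℕ × ℕ, μ (A jk.1 ∩ B jk.2)
      = if jk.1 = jk.2 then 0 else ENNReal.ofReal (a jk.1) * ENNReal.ofReal (b jk.2) := by
    rintro ⟨j, k⟩
    by_cases hjk : j = k
    · subst hjk
      have : A j ∩ B j = ∅ := by
        ext ω
        simp only [hA, hB, Set.mem_inter_iff, Set.mem_preimage, Set.mem_singleton_iff,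
          Set.mem_empty_iff_false, iff_false, not_and]
        intro h1 h2
        exact hsucc_ne (h1 ▸ h2 ▸ rfl)
      rw [this, measure_empty]
      simp
    · simp only [if_neg hjk]
      have hind := (hindep.indepFun hjk).measure_inter_preimage_eq_mul
        {p.succ} {p'.succ} (measurableSet_singleton _) (measurableSet_singleton _)
      calc μ (A j ∩ B k) = μ (A j) * μ (B k) := hind
        _ = ENNReal.ofReal (a j) * ENNReal.ofReal (b k) := by rw [hμA, hμB]
  set D : ℝ≥0∞ := ∑' j : ℕ, ENNReal.ofReal (a j) * ENNReal.ofReal (b j) with hD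
  have hDval : D = ENNReal.ofReal (∑' j, a j * b j) := by
    rw [hD, ENNReal.ofReal_tsum_of_nonneg (fun j => mul_nonneg (hanonneg j) (hbnonneg j)) hsumab]
    exact tsum_congr fun j => (ENNReal.ofReal_mul (hanonneg j)).symm
  have hDne : D ≠ ∞ := by rw [hDval]; exact ENNReal.ofReal_ne_top
  -- the key combinatorial identity
  have hkey : (∑' jk : ℕ × ℕ, if jk.1 = jk.2 then 0
        else ENNReal.ofReal (a jk.1) * ENNReal.ofReal (b jk.2)) + D
      = ENNReal.ofReal (∑' j, a j) * ENNReal.ofReal (∑' j, b j) := by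
    have hdiag : (∑' jk : ℕ × ℕ, if jk.1 = jk.2
          then ENNReal.ofReal (a jk.1) * ENNReal.ofReal (b jk.2) else 0) = D := by
      rw [ENNReal.tsum_prod']
      dsimp only
      rw [hD]
      refine tsum_congr fun j => ?_
      rw [tsum_eq_single j (fun k hk => if_neg (fun h => hk (h.symm)))]
      exact if_pos rfl
    rw [← hdiag, ← ENNReal.tsum_add]
    have : ∀ jk : ℕ × ℕ,
        ((if jk.1 = jk.2 then 0 else ENNReal.ofReal (a jk.1) * ENNReal.ofReal (b jk.2))
          + if jk.1 = jk.2 then ENNReal.ofReal (a jk.1) * ENNReal.ofReal (b jk.2) else 0)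
        = ENNReal.ofReal (a jk.1) * ENNReal.ofReal (b jk.2) := by
      intro jk; split_ifs <;> simp
    rw [tsum_congr this, ENNReal.tsum_prod']
    dsimp only
    rw [ENNReal.ofReal_tsum_of_nonneg hanonneg hsuma,
      ENNReal.ofReal_tsum_of_nonneg hbnonneg hsumb]
    rw [← ENNReal.tsum_mul_right]
    exact tsum_congr fun j => ENNReal.tsum_mul_left
  have hlintFG : ∫⁻ ω, F ω * G ω ∂μ
      = ∑' jk : ℕ × ℕ, (if jk.1 = jk.2 then 0
          else ENNReal.ofReal (a jk.1) * ENNReal.ofReal (b jk.2)) := by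
    calc ∫⁻ ω, F ω * G ω ∂μ
        = ∫⁻ ω, ∑' jk : ℕ × ℕ,
            (if Y jk.1 ω = p.succ ∧ Y jk.2 ω = p'.succ then (1:ℝ≥0∞) else 0) ∂μ := by
          exact lintegral_congr hFG
      _ = ∑' jk : ℕ × ℕ, ∫⁻ ω,
            (if Y jk.1 ω = p.succ ∧ Y jk.2 ω = p'.succ then (1:ℝ≥0∞) else 0) ∂μ :=
          lintegral_tsum (fun jk => (hprod_meas jk).aemeasurable)
      _ = _ := by
          refine tsum_congr fun jk => ?_
          rw [hlint_prod jk, hcval jk]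
  -- finiteness
  have hFfin : ∀ᵐ ω ∂μ, F ω < ∞ := by
    refine ae_lt_top hFmeas ?_
    rw [hlintF]; exact ENNReal.ofReal_ne_top
  have hGfin : ∀ᵐ ω ∂μ, G ω < ∞ := by
    refine ae_lt_top hGmeas ?_
    rw [hlintG]; exact ENNReal.ofReal_ne_top
  -- real integrals via lintegrals
  have hXp : ∀ ω, (∑' j : ℕ, if Y j ω = p.succ then (1:ℝ) else 0) = (F ω).toReal := fun ω => by
    rw [hF]; exact tsum_ite_real_eq_toReal _
  have hXp' : ∀ ω, (∑' j : ℕ, if Y j ω = p'.succ then (1:ℝ) else 0) = (G ω).toReal := fun ω => by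
    rw [hG]; exact tsum_ite_real_eq_toReal _
  have hintF : (∫ ω, (∑' j : ℕ, if Y j ω = p.succ then (1:ℝ) else 0) ∂μ)
      = (∫⁻ ω, F ω ∂μ).toReal := by
    simp_rw [hXp]
    rw [integral_eq_lintegral_of_nonneg_ae (ae_of_all _ fun ω => ENNReal.toReal_nonneg)
      hFmeas.ennreal_toReal.aestronglyMeasurable]
    congr 1
    refine lintegral_congr_ae ?_
    filter_upwards [hFfin] with ω hω
    exact ENNReal.ofReal_toReal hω.ne
  have hintG : (∫ ω, (∑' j : ℕ, if Y j ω = p'.succ then (1:ℝ) else 0) ∂μ)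
      = (∫⁻ ω, G ω ∂μ).toReal := by
    simp_rw [hXp']
    rw [integral_eq_lintegral_of_nonneg_ae (ae_of_all _ fun ω => ENNReal.toReal_nonneg)
      hGmeas.ennreal_toReal.aestronglyMeasurable]
    congr 1
    refine lintegral_congr_ae ?_
    filter_upwards [hGfin] with ω hω
    exact ENNReal.ofReal_toReal hω.ne
  have hintFG : (∫ ω, (∑' j : ℕ, if Y j ω = p.succ then (1:ℝ) else 0)
        * (∑' j : ℕ, if Y j ω = p'.succ then (1:ℝ) else 0) ∂μ)
      = (∫⁻ ω, F ω * G ω ∂μ).toReal := by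
    simp_rw [hXp, hXp']
    rw [integral_eq_lintegral_of_nonneg_ae
      (ae_of_all _ fun ω => mul_nonneg ENNReal.toReal_nonneg ENNReal.toReal_nonneg)
      (hFmeas.ennreal_toReal.mul hGmeas.ennreal_toReal).aestronglyMeasurable]
    congr 1
    refine lintegral_congr_ae ?_
    filter_upwards [hFfin, hGfin] with ω h1 h2
    rw [ENNReal.ofReal_mul ENNReal.toReal_nonneg, ENNReal.ofReal_toReal h1.ne,
      ENNReal.ofReal_toReal h2.ne]
  -- the target sum equals ∑ a j * b j
  have htarget : (∑' j : ℕ, θ p * θ p' * (q p * q p') ^ j / (1 + ∑ k, θ k * q k ^ j) ^ 2)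
      = ∑' j, a j * b j := by
    refine tsum_congr fun j => ?_
    rw [ha, hb]
    simp only []
    rw [div_mul_div_comm]
    congr 1
    · rw [mul_pow]; ring
    · ring
  -- assemble the covariance computation
  have hαnn : (0:ℝ) ≤ ∑' j, a j := tsum_nonneg hanonneg
  have hβnn : (0:ℝ) ≤ ∑' j, b j := tsum_nonneg hbnonneg
  have hPne : ENNReal.ofReal (∑' j, a j) * ENNReal.ofReal (∑' j, b j) ≠ ∞ :=
    ENNReal.mul_ne_top ENNReal.ofReal_ne_top ENNReal.ofReal_ne_top
  have hDle : D ≤ ENNReal.ofReal (∑' j, a j) * ENNReal.ofReal (∑' j, b j) := by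
    rw [← hkey]; exact le_add_self
  have hCeq : (∑' jk : ℕ × ℕ, if jk.1 = jk.2 then 0
        else ENNReal.ofReal (a jk.1) * ENNReal.ofReal (b jk.2))
      = ENNReal.ofReal (∑' j, a j) * ENNReal.ofReal (∑' j, b j) - D :=
    ENNReal.eq_sub_of_add_eq hDne hkey
  have hcov : (∫ ω, (∑' j : ℕ, if Y j ω = p.succ then (1:ℝ) else 0)
        * (∑' j : ℕ, if Y j ω = p'.succ then (1:ℝ) else 0) ∂μ)
      - (∫ ω, (∑' j : ℕ, if Y j ω = p.succ then (1:ℝ) else 0) ∂μ)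
        * (∫ ω, (∑' j : ℕ, if Y j ω = p'.succ then (1:ℝ) else 0) ∂μ)
      = -(∑' j, a j * b j) := by
    rw [hintF, hintG, hintFG, hlintF, hlintG, hlintFG, hCeq]
    rw [ENNReal.toReal_sub_of_le hDle hPne]
    rw [ENNReal.toReal_mul, ENNReal.toReal_ofReal hαnn, ENNReal.toReal_ofReal hβnn]
    rw [hDval, ENNReal.toReal_ofReal (tsum_nonneg fun j => mul_nonneg (hanonneg j) (hbnonneg j))]
    ring
  have habpos : (0:ℝ) < ∑' j, a j * b j := by
    refine Summable.tsum_pos hsumab (fun j => mul_nonneg (hanonneg j) (hbnonneg j)) 0 ?_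
    exact mul_pos (by rw [ha]; have := hθ p; have := (hq p).1; have := hSpos 0; positivity)
      (by rw [hb]; have := hθ p'; have := (hq p').1; have := hSpos 0; positivity)
  constructor
  · rw [htarget]; exact hcov
  · rw [htarget]; linarith
end

section
/- The joint factorial-moment/probability generating function of the multi-dimensional Heine distribution satisfies E[∏_{k=1}^m s_k^{X_k}] = ∏_{j=0}^∞ (1 + ∑_{k=1}^m s_k θ_k q_k^j)/(1 + ∑_{k=1}^m θ_k q_k^j) for s₁,...,s_m ∈ [0,1]. -/
open scoped BigOperators
open MeasureTheory ProbabilityTheory Filter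
open scoped Topology

/-- The joint probability generating function of the multi-dimensional Heine
distribution: `E[∏_k s_k^{X_k}] = ∏_{j=0}^∞ (1 + ∑_k s_k θ_k q_k^j)/(1 + ∑_k θ_k q_k^j)`
for `s₁,…,s_m ∈ [0,1]`. -/
theorem heine_joint_pgf
    {Ω : Type*} [MeasurableSpace Ω] (μ : Measure Ω) [IsProbabilityMeasure μ]
    (m : ℕ) (hm : 0 < m) (θ q : Fin m → ℝ)
    (hθ : ∀ k, 0 < θ k) (hq : ∀ k, q k ∈ Set.Ioo (0 : ℝ) 1)
    (Y : ℕ → Ω → Fin (m + 1))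
    (hmeas : ∀ j, Measurable (Y j))
    (hindep : iIndepFun Y μ)
    (hY0 : ∀ j, μ {ω | Y j ω = 0}
      = ENNReal.ofReal (1 / (1 + ∑ l, θ l * q l ^ j)))
    (hYk : ∀ j, ∀ k : Fin m, μ {ω | Y j ω = k.succ}
      = ENNReal.ofReal (θ k * q k ^ j / (1 + ∑ l, θ l * q l ^ j)))
    (s : Fin m → ℝ) (hs : ∀ k, s k ∈ Set.Icc (0 : ℝ) 1) :
    ∫ ω, ∏ k : Fin m, s k ^ (Nat.card {j : ℕ | Y j ω = k.succ}) ∂μ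
      = ∏' j : ℕ, (1 + ∑ k, s k * θ k * q k ^ j) / (1 + ∑ k, θ k * q k ^ j) := by
  classical
  set D : ℕ → ℝ := fun j => 1 + ∑ l, θ l * q l ^ j with hDdef
  set N : ℕ → ℝ := fun j => 1 + ∑ k, s k * θ k * q k ^ j with hNdef
  set a : ℕ → ℝ := fun j => N j / D j with hadef
  have hterm_nonneg : ∀ j l, 0 ≤ θ l * q l ^ j := fun j l =>
    mul_nonneg (hθ l).le (pow_nonneg (hq l).1.le j)
  have hD1 : ∀ j, (1 : ℝ) ≤ D j := fun j =>
    le_add_of_nonneg_right (Finset.sum_nonneg fun l _ => hterm_nonneg j l)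
  have hN1 : ∀ j, (1 : ℝ) ≤ N j := fun j =>
    le_add_of_nonneg_right (Finset.sum_nonneg fun l _ =>
      mul_nonneg (mul_nonneg (hs l).1 (hθ l).le) (pow_nonneg (hq l).1.le j))
  have hND : ∀ j, N j ≤ D j := by
    intro j
    apply add_le_add_right
    apply Finset.sum_le_sum
    intro l _
    rw [mul_assoc]
    exact mul_le_of_le_one_left (hterm_nonneg j l) (hs l).2
  have hDpos : ∀ j, (0 : ℝ) < D j := fun j => lt_of_lt_of_le one_pos (hD1 j)
  have hNpos : ∀ j, (0 : ℝ) < N j := fun j => lt_of_lt_of_le one_pos (hN1 j)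
  have hapos : ∀ j, (0 : ℝ) < a j := fun j => div_pos (hNpos j) (hDpos j)
  have hale1 : ∀ j, a j ≤ 1 := fun j => (div_le_one (hDpos j)).mpr (hND j)
  -- summability of geometric majorant
  have hsumgeo : ∀ l : Fin m, Summable (fun j : ℕ => θ l * q l ^ j) := fun l =>
    (summable_geometric_of_lt_one (hq l).1.le (hq l).2).mul_left _
  have hsumD : Summable (fun j => ∑ l, θ l * q l ^ j) :=
    summable_sum fun l _ => hsumgeo l
  -- summability of the logs
  have hlog_sum : Summable (fun j => Real.log (a j)) := by
    apply hsumD.of_norm_bounded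
    intro j
    have h1 : Real.log (a j) ≤ 0 := Real.log_nonpos (hapos j).le (hale1 j)
    rw [Real.norm_eq_abs, abs_of_nonpos h1, hadef]
    simp only
    rw [Real.log_div (hNpos j).ne' (hDpos j).ne', neg_sub]
    have h2 : (0 : ℝ) ≤ Real.log (N j) := Real.log_nonneg (hN1 j)
    have h3 : Real.log (D j) ≤ D j - 1 := Real.log_le_sub_one_of_pos (hDpos j)
    have : D j - 1 = ∑ l, θ l * q l ^ j := by simp [hDdef]
    linarith
  -- the infinite product
  have hprod : HasProd a (Real.exp (∑' j, Real.log (a j))) := by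
    have hsum : HasSum (fun j => Real.log (a j)) (∑' j, Real.log (a j)) := hlog_sum.hasSum
    have := (Real.continuous_exp.continuousAt.tendsto).comp hsum
    refine this.congr fun F => ?_
    rw [Function.comp_apply, Real.exp_sum]
    exact Finset.prod_congr rfl fun j _ => Real.exp_log (hapos j)
  have htend_partial : Tendsto (fun n => ∏ j ∈ Finset.range n, a j) atTop (𝓝 (∏' j, a j)) := by
    rw [hprod.tprod_eq]
    exact hprod.tendsto_prod_nat
  -- the random variables
  set g : Fin (m + 1) → ℝ := Fin.cases 1 s with hgdef
  set Z : ℕ → Ω → ℝ := fun j => g ∘ Y j with hZdef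
  have hgmeas : Measurable g := measurable_of_finite g
  have hZmeas : ∀ j, Measurable (Z j) := fun j => hgmeas.comp (hmeas j)
  have hg01 : ∀ v, g v ∈ Set.Icc (0 : ℝ) 1 := by
    intro v
    induction v using Fin.cases with
    | zero => simp [hgdef]
    | succ k => simpa [hgdef] using hs k
  have hZ01 : ∀ j ω, Z j ω ∈ Set.Icc (0 : ℝ) 1 := fun j ω => hg01 (Y j ω)
  -- expectation of a single factor
  have hint : ∀ j, ∫ ω, Z j ω ∂μ = a j := by
    intro j
    have hmap : ∫ ω, Z j ω ∂μ = ∫ v, g v ∂(μ.map (Y j)) :=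
      (integral_map (hmeas j).aemeasurable hgmeas.aestronglyMeasurable).symm
    rw [hmap]
    have : IsProbabilityMeasure (μ.map (Y j)) := Measure.isProbabilityMeasure_map (hmeas j).aemeasurable
    rw [integral_fintype (Integrable.of_finite)]
    have hsing : ∀ v : Fin (m + 1), (μ.map (Y j)) {v} = μ {ω | Y j ω = v} := by
      intro v
      rw [Measure.map_apply (hmeas j) (measurableSet_singleton v)]
      rfl
    rw [Fin.sum_univ_succ]
    simp only [measureReal_def, hsing]
    rw [hY0 j]
    have hsucc : ∀ k : Fin m,
        ((μ {ω | Y j ω = k.succ}).toReal) • g k.succ = s k * θ k * q k ^ j / D j := by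
      intro k
      rw [hYk j k, ENNReal.toReal_ofReal (div_nonneg (hterm_nonneg j k) (hDpos j).le)]
      simp only [hgdef, Fin.cases_succ, smul_eq_mul]
      ring
    rw [Finset.sum_congr rfl fun k _ => hsucc k]
    rw [ENNReal.toReal_ofReal (div_nonneg one_pos.le (hDpos j).le)]
    simp only [hgdef, Fin.cases_zero, smul_eq_mul, mul_one]
    rw [← Finset.sum_div, ← add_div]
  -- independence of the factors
  have hZindep : iIndepFun Z μ :=
    hindep.comp (fun _ => g) (fun _ => hgmeas)
  -- expectation of a finite product
  have hprodint : ∀ n, ∫ ω, ∏ j ∈ Finset.range n, Z j ω ∂μ = ∏ j ∈ Finset.range n, a j := by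
    intro n
    induction n with
    | zero => simp
    | succ n ih =>
      have hIF : IndepFun (∏ j ∈ Finset.range n, Z j) (Z n) μ :=
        hZindep.indepFun_prod_range_succ hZmeas n
      have hX : AEStronglyMeasurable (∏ j ∈ Finset.range n, Z j) μ := by
        rw [Finset.prod_fn]
        exact (Finset.range n).aestronglyMeasurable_fun_prod
          (fun j _ => (hZmeas j).aestronglyMeasurable)
      have h2 := hIF.integral_fun_mul_eq_mul_integral hX (hZmeas n).aestronglyMeasurable
      simp only [Finset.prod_apply] at h2
      simp only [Finset.prod_range_succ]
      rw [h2, ih, hint n]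
  -- Borel–Cantelli: almost surely each fibre set is finite
  have hfin : ∀ᵐ ω ∂μ, ∀ k : Fin m, {j : ℕ | Y j ω = k.succ}.Finite := by
    rw [ae_all_iff]
    intro k
    have hBC : μ {ω | ∃ᶠ j in atTop, Y j ω = k.succ} = 0 := by
      apply measure_setOf_frequently_eq_zero
      have hle : ∑' j, μ {ω | Y j ω = k.succ}
          ≤ ∑' j, ENNReal.ofReal (θ k * q k ^ j) := by
        apply ENNReal.tsum_le_tsum
        intro j
        rw [hYk j k]
        apply ENNReal.ofReal_le_ofReal
        exact div_le_self (hterm_nonneg j k) (hD1 j)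
      have hfin' : ∑' j, ENNReal.ofReal (θ k * q k ^ j) ≠ ⊤ := by
        rw [← ENNReal.ofReal_tsum_of_nonneg (fun j => hterm_nonneg j k) (hsumgeo k)]
        exact ENNReal.ofReal_ne_top
      exact ne_top_of_le_ne_top hfin' hle
    have hsets : {ω | ¬ {j : ℕ | Y j ω = k.succ}.Finite}
        = {ω | ∃ᶠ j in atTop, Y j ω = k.succ} := by
      ext ω
      simp only [Set.mem_setOf_eq]
      rw [Nat.frequently_atTop_iff_infinite]
      exact Iff.rfl
    rw [ae_iff, hsets]
    exact hBC
  -- pointwise convergence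
  have hkey : ∀ ω n, ∏ j ∈ Finset.range n, Z j ω
      = ∏ k : Fin m, s k ^ ((Finset.range n).filter (fun j => Y j ω = k.succ)).card := by
    intro ω n
    have hZeq : ∀ j, Z j ω = ∏ k : Fin m, s k ^ (if Y j ω = k.succ then 1 else 0) := by
      intro j
      rcases Fin.eq_zero_or_eq_succ (Y j ω) with h0 | ⟨k₀, hk₀⟩
      · rw [hZdef]
        simp only [Function.comp_apply, h0, hgdef, Fin.cases_zero]
        rw [eq_comm]
        apply Finset.prod_eq_one
        intro k _
        have hne : (0 : Fin (m + 1)) ≠ k.succ := (Fin.succ_ne_zero k).symm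
        simp [h0, hne]
      · rw [hZdef]
        simp only [Function.comp_apply, hk₀, hgdef, Fin.cases_succ]
        rw [eq_comm]
        rw [Finset.prod_eq_single k₀]
        · simp
        · intro k _ hkne
          have hne : k₀.succ ≠ k.succ := fun h => hkne (Fin.succ_injective m h).symm
          simp [hk₀, hne]
        · simp
    calc ∏ j ∈ Finset.range n, Z j ω
        = ∏ j ∈ Finset.range n, ∏ k : Fin m, s k ^ (if Y j ω = k.succ then 1 else 0) :=
          Finset.prod_congr rfl fun j _ => hZeq j
      _ = ∏ k : Fin m, ∏ j ∈ Finset.range n, s k ^ (if Y j ω = k.succ then 1 else 0) :=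
          Finset.prod_comm
      _ = ∏ k : Fin m, s k ^ (∑ j ∈ Finset.range n, if Y j ω = k.succ then 1 else 0) :=
          Finset.prod_congr rfl fun k _ => Finset.prod_pow_eq_pow_sum _ _ _
      _ = ∏ k : Fin m, s k ^ ((Finset.range n).filter (fun j => Y j ω = k.succ)).card := by
          refine Finset.prod_congr rfl fun k _ => ?_
          rw [Finset.card_filter]
  have hptwise : ∀ᵐ ω ∂μ, Tendsto (fun n => ∏ j ∈ Finset.range n, Z j ω) atTop
      (𝓝 (∏ k : Fin m, s k ^ (Nat.card {j : ℕ | Y j ω = k.succ}))) := by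
    filter_upwards [hfin] with ω hω
    have hev : ∀ᶠ n in atTop, ∏ j ∈ Finset.range n, Z j ω
        = ∏ k : Fin m, s k ^ (Nat.card {j : ℕ | Y j ω = k.succ}) := by
      have hevk : ∀ k : Fin m, ∀ᶠ n in atTop,
          ((Finset.range n).filter (fun j => Y j ω = k.succ)).card
            = Nat.card {j : ℕ | Y j ω = k.succ} := by
        intro k
        obtain ⟨B, hB⟩ := (hω k).bddAbove
        filter_upwards [eventually_ge_atTop (B + 1)] with n hn
        have hset : (Finset.range n).filter (fun j => Y j ω = k.succ) = (hω k).toFinset := by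
          ext j
          simp only [Finset.mem_filter, Finset.mem_range, Set.Finite.mem_toFinset,
            Set.mem_setOf_eq]
          constructor
          · exact fun h => h.2
          · intro h
            refine ⟨lt_of_le_of_lt (hB h) ?_, h⟩
            omega
        rw [hset, Nat.card_coe_set_eq, Set.ncard_eq_toFinset_card _ (hω k)]
      filter_upwards [eventually_all.mpr hevk] with n hn
      rw [hkey ω n]
      exact Finset.prod_congr rfl fun k _ => by rw [hn k]
    refine Tendsto.congr' ?_ tendsto_const_nhds
    filter_upwards [hev] with n hn
    exact hn.symm
  -- dominated convergence
  have hdom : Tendsto (fun n => ∫ ω, ∏ j ∈ Finset.range n, Z j ω ∂μ) atTop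
      (𝓝 (∫ ω, ∏ k : Fin m, s k ^ (Nat.card {j : ℕ | Y j ω = k.succ}) ∂μ)) := by
    apply tendsto_integral_of_dominated_convergence (fun _ => (1 : ℝ))
    · intro n
      exact (Finset.range n).aestronglyMeasurable_fun_prod
        (fun j _ => (hZmeas j).aestronglyMeasurable)
    · exact integrable_const 1
    · intro n
      filter_upwards with ω
      rw [Real.norm_eq_abs, abs_of_nonneg (Finset.prod_nonneg fun j _ => (hZ01 j ω).1)]
      exact Finset.prod_le_one (fun j _ => (hZ01 j ω).1) (fun j _ => (hZ01 j ω).2)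
    · exact hptwise
  have := hdom
  rw [show (fun n => ∫ ω, ∏ j ∈ Finset.range n, Z j ω ∂μ)
      = fun n => ∏ j ∈ Finset.range n, a j from funext hprodint] at this
  exact tendsto_nhds_unique this htend_partial
end

section
/- For ρ ∈ (0,1) and θ > 0 and each α ∈ ℕ, the quantity (1/(-θρ; ρ²)_∞) · ρ^{α(α-1)} (θρ)^α / (ρ²;ρ²)_α is strictly positive and these quantities sum to 1 over α ∈ ℕ; i.e., He(θρ, ρ²) is a well-defined probability distribution on ℕ. -/
open scoped BigOperators

/-- The `He(θρ, ρ²)` mass function: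
`(1/(-θρ;ρ²)_∞) ⋅ ρ^{α(α-1)} (θρ)^α / (ρ²;ρ²)_α`, where
`(-θρ;ρ²)_∞ = ∏_{i=0}^∞ (1 + θρ^{2i+1})` and `(ρ²;ρ²)_α = ∏_{i=1}^α (1 - ρ^{2i})`. -/
noncomputable def heinePdf (θ ρ : ℝ) (α : ℕ) : ℝ :=
  (1 / ∏' i : ℕ, (1 + θ * ρ ^ (2 * i + 1))) * ρ ^ (α * (α - 1)) * (θ * ρ) ^ α
    / ∏ i ∈ Finset.range α, (1 - ρ ^ (2 * (i + 1)))

section HeineAux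
open Finset Filter Topology

noncomputable def heA (ρ x : ℝ) (α : ℕ) : ℝ :=
  ρ ^ (α * (α - 1)) * x ^ α / ∏ i ∈ Finset.range α, (1 - ρ ^ (2 * (i + 1)))

lemma heA_zero (ρ x : ℝ) : heA ρ x 0 = 1 := by simp [heA]

lemma heExp (α : ℕ) : (α + 1) * ((α + 1) - 1) = α * (α - 1) + 2 * α := by
  cases α with
  | zero => rfl
  | succ n => simp [Nat.succ_sub_one]; ring

-- positivity of the finite product
lemma heD_pos' {ρ : ℝ} (hρ : ρ ∈ Set.Ioo (0:ℝ) 1) (α : ℕ) :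
    0 < ∏ i ∈ Finset.range α, (1 - ρ ^ (2 * (i + 1))) := by
  apply Finset.prod_pos
  intro i _
  have : ρ ^ (2 * (i + 1)) < 1 := pow_lt_one₀ hρ.1.le hρ.2 (by positivity)
  linarith

lemma heA_succ {ρ : ℝ} (hρ : ρ ∈ Set.Ioo (0:ℝ) 1) (x : ℝ) (α : ℕ) :
    heA ρ x (α + 1) = heA ρ x α * (ρ ^ (2 * α) * x) / (1 - ρ ^ (2 * (α + 1))) := by
  have hD := (heD_pos' hρ α).ne'
  have hc : (1 - ρ ^ (2 * (α + 1))) ≠ 0 := by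
    have : ρ ^ (2 * (α + 1)) < 1 := pow_lt_one₀ hρ.1.le hρ.2 (by positivity)
    linarith
  unfold heA
  rw [Finset.prod_range_succ, heExp, pow_add, pow_succ]
  field_simp

lemma heA_pos {ρ x : ℝ} (hρ : ρ ∈ Set.Ioo (0:ℝ) 1) (hx : 0 < x) (α : ℕ) :
    0 < heA ρ x α := by
  unfold heA
  have h1 : (0:ℝ) < ρ := hρ.1
  have := heD_pos' hρ α
  positivity

lemma heA_nonneg {ρ x : ℝ} (hρ : ρ ∈ Set.Ioo (0:ℝ) 1) (hx : 0 ≤ x) (α : ℕ) :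
    0 ≤ heA ρ x α := by
  unfold heA
  have h1 : (0:ℝ) < ρ := hρ.1
  have := heD_pos' hρ α
  positivity

lemma he_pow_lt_one {ρ : ℝ} (hρ : ρ ∈ Set.Ioo (0:ℝ) 1) (k : ℕ) (hk : k ≠ 0) :
    ρ ^ k < 1 := pow_lt_one₀ hρ.1.le hρ.2 hk

lemma heA_rec {ρ : ℝ} (hρ : ρ ∈ Set.Ioo (0:ℝ) 1) (x : ℝ) (α : ℕ) :
    heA ρ x (α + 1) = heA ρ (ρ ^ 2 * x) (α + 1) + x * heA ρ (ρ ^ 2 * x) α := by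
  have hD := (heD_pos' hρ α).ne'
  have hc : (1 - ρ ^ (2 * (α + 1))) ≠ 0 := by
    have := he_pow_lt_one hρ (2 * (α + 1)) (by positivity)
    linarith
  unfold heA
  rw [Finset.prod_range_succ, heExp, pow_add, pow_succ]
  field_simp
  ring

lemma heA_summable {ρ x : ℝ} (hρ : ρ ∈ Set.Ioo (0:ℝ) 1) (hx : 0 ≤ x) :
    Summable (heA ρ x) := by
  have h1 : (0:ℝ) < ρ := hρ.1
  have h2 : ρ ^ 2 < 1 := he_pow_lt_one hρ 2 (by norm_num)
  have h2' : (0:ℝ) < 1 - ρ ^ 2 := by linarith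
  have ht : Filter.Tendsto (fun α : ℕ => ρ ^ (2 * α) * x) Filter.atTop (𝓝 0) := by
    have := (tendsto_pow_atTop_nhds_zero_of_lt_one (by positivity) h2).mul_const x
    simpa [pow_mul, zero_mul] using this
  have hev : ∀ᶠ α in Filter.atTop, ρ ^ (2 * α) * x < (1 - ρ ^ 2) / 2 :=
    ht.eventually_lt_const (by linarith)
  apply summable_of_ratio_norm_eventually_le (r := 1/2) (by norm_num)
  filter_upwards [hev] with α hα
  have hc1 : ρ ^ (2 * (α + 1)) ≤ ρ ^ 2 := by
    apply pow_le_pow_of_le_one hρ.1.le hρ.2.le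
    omega
  have hcpos : (0:ℝ) < 1 - ρ ^ (2 * (α + 1)) := by
    have := he_pow_lt_one hρ (2 * (α + 1)) (by positivity)
    linarith
  have h0 : 0 ≤ heA ρ x α := heA_nonneg hρ hx α
  rw [heA_succ hρ x α]
  rw [Real.norm_eq_abs, Real.norm_eq_abs, abs_of_nonneg (by positivity),
    abs_of_nonneg h0]
  rw [div_le_iff₀ hcpos]
  have hxa : 0 ≤ ρ ^ (2 * α) * x := by positivity
  nlinarith [hα, hcpos, h0, hc1]

lemma heF_eq {ρ x : ℝ} (hρ : ρ ∈ Set.Ioo (0:ℝ) 1) (hx : 0 ≤ x) :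
    ∑' α, heA ρ x α = (1 + x) * ∑' α, heA ρ (ρ ^ 2 * x) α := by
  have h1 : (0:ℝ) < ρ := hρ.1
  have hx' : 0 ≤ ρ ^ 2 * x := mul_nonneg (by positivity) hx
  have hs := heA_summable hρ hx
  have hs' := heA_summable hρ hx'
  have hs1 : Summable fun α => heA ρ (ρ ^ 2 * x) (α + 1) :=
    (summable_nat_add_iff 1).2 hs'
  have e1 : ∑' α, heA ρ x α = 1 + ∑' α, heA ρ x (α + 1) := by
    rw [Summable.tsum_eq_zero_add hs, heA_zero]
  have e2 : ∑' α, heA ρ (ρ ^ 2 * x) α = 1 + ∑' α, heA ρ (ρ ^ 2 * x) (α + 1) := by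
    rw [Summable.tsum_eq_zero_add hs', heA_zero]
  have e3 : ∑' α, heA ρ x (α + 1)
      = (∑' α, heA ρ (ρ ^ 2 * x) (α + 1)) + x * ∑' α, heA ρ (ρ ^ 2 * x) α := by
    rw [← tsum_mul_left, ← Summable.tsum_add hs1 (hs'.mul_left x)]
    exact tsum_congr (heA_rec hρ x)
  rw [e1, e3, e2]; ring

lemma heF_iter {ρ x : ℝ} (hρ : ρ ∈ Set.Ioo (0:ℝ) 1) (hx : 0 ≤ x) (n : ℕ) :
    ∑' α, heA ρ x α
      = (∏ i ∈ Finset.range n, (1 + x * ρ ^ (2 * i))) * ∑' α, heA ρ (ρ ^ (2 * n) * x) α := by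
  have h1 : (0:ℝ) < ρ := hρ.1
  induction n with
  | zero => simp
  | succ n ih =>
    have hy : 0 ≤ ρ ^ (2 * n) * x := mul_nonneg (by positivity) hx
    rw [ih, Finset.prod_range_succ, heF_eq hρ hy]
    have e : ρ ^ 2 * (ρ ^ (2 * n) * x) = ρ ^ (2 * (n + 1)) * x := by
      rw [show 2 * (n + 1) = 2 * n + 2 by ring, pow_add]; ring
    rw [e]; ring

lemma heHasProd_exp {g : ℕ → ℝ} (h1 : ∀ n, 0 < g n)
    (h2 : Summable fun n => Real.log (g n)) :
    HasProd g (Real.exp (∑' n, Real.log (g n))) := by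
  have h := h2.hasSum.rexp
  have e : (Real.exp ∘ fun n => Real.log (g n)) = g :=
    funext fun n => Real.exp_log (h1 n)
  rwa [e] at h

lemma heLogSummable_one_sub {ρ : ℝ} (hρ : ρ ∈ Set.Ioo (0:ℝ) 1) :
    Summable fun i : ℕ => Real.log (1 - ρ ^ (2 * (i + 1))) := by
  have h1 : (0:ℝ) < ρ := hρ.1
  have h2 : ρ ^ 2 < 1 := he_pow_lt_one hρ 2 (by norm_num)
  apply Summable.of_abs
  refine Summable.of_nonneg_of_le (fun i => abs_nonneg _) (fun i => ?_)
    (((summable_geometric_of_lt_one (by positivity) h2).mul_left (ρ ^ 2 / (1 - ρ ^ 2))))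
  ·
    have hlt : ρ ^ (2 * (i + 1)) < 1 := he_pow_lt_one hρ _ (by positivity)
    have hle : ρ ^ (2 * (i + 1)) ≤ ρ ^ 2 := pow_le_pow_of_le_one h1.le hρ.2.le (by omega)
    have hgpos : (0:ℝ) < 1 - ρ ^ (2 * (i + 1)) := by linarith
    have hlog : Real.log (1 - ρ ^ (2 * (i + 1))) ≤ 0 :=
      Real.log_nonpos (by nlinarith [pow_pos h1 (2 * (i + 1))]) (by nlinarith [pow_pos h1 (2 * (i + 1))])
    rw [abs_of_nonpos hlog, ← Real.log_inv]
    have := Real.log_le_sub_one_of_pos (inv_pos.2 hgpos)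
    have e : (1 - ρ ^ (2 * (i + 1)))⁻¹ - 1 = ρ ^ (2 * (i + 1)) / (1 - ρ ^ (2 * (i + 1))) := by
      field_simp
      ring
    have hb : ρ ^ (2 * (i + 1)) / (1 - ρ ^ (2 * (i + 1))) ≤ ρ ^ (2 * (i + 1)) / (1 - ρ ^ 2) := by
      apply div_le_div_of_nonneg_left (by positivity) (by linarith) (by linarith)
    have e2 : ρ ^ (2 * (i + 1)) / (1 - ρ ^ 2) = (ρ ^ 2 / (1 - ρ ^ 2)) * (ρ ^ 2) ^ i := by
      rw [show 2 * (i + 1) = 2 + 2 * i by ring, pow_add, pow_mul]; ring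
    linarith [e ▸ this, e2 ▸ hb]

lemma heLogSummable_one_add {ρ x : ℝ} (hρ : ρ ∈ Set.Ioo (0:ℝ) 1) (hx : 0 ≤ x) :
    Summable fun i : ℕ => Real.log (1 + x * ρ ^ (2 * i)) := by
  have h1 : (0:ℝ) < ρ := hρ.1
  have h2 : ρ ^ 2 < 1 := he_pow_lt_one hρ 2 (by norm_num)
  refine Summable.of_nonneg_of_le
    (fun i => Real.log_nonneg (by nlinarith [pow_pos h1 (2 * i)])) (fun i => ?_)
    ((summable_geometric_of_lt_one (by positivity) h2).mul_left x)
  ·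
    have hp : (0:ℝ) < 1 + x * ρ ^ (2 * i) := by nlinarith [pow_pos h1 (2 * i)]
    have := Real.log_le_sub_one_of_pos hp
    rw [pow_mul] at *
    linarith

lemma heC_hasProd {ρ : ℝ} (hρ : ρ ∈ Set.Ioo (0:ℝ) 1) :
    HasProd (fun i : ℕ => 1 - ρ ^ (2 * (i + 1)))
      (Real.exp (∑' i : ℕ, Real.log (1 - ρ ^ (2 * (i + 1))))) :=
  heHasProd_exp
    (fun i => by
      have h1 : (0:ℝ) < ρ := hρ.1
      have := he_pow_lt_one hρ (2 * (i + 1)) (by positivity)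
      linarith)
    (heLogSummable_one_sub hρ)

lemma heC_pos {ρ : ℝ} (hρ : ρ ∈ Set.Ioo (0:ℝ) 1) :
    0 < ∏' i : ℕ, (1 - ρ ^ (2 * (i + 1))) := by
  rw [(heC_hasProd hρ).tprod_eq]
  exact Real.exp_pos _

lemma heC_le_D {ρ : ℝ} (hρ : ρ ∈ Set.Ioo (0:ℝ) 1) (α : ℕ) :
    (∏' i : ℕ, (1 - ρ ^ (2 * (i + 1)))) ≤ ∏ i ∈ Finset.range α, (1 - ρ ^ (2 * (i + 1))) := by
  have h1 : (0:ℝ) < ρ := hρ.1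
  have ht := ((heC_hasProd hρ).tprod_eq ▸ (heC_hasProd hρ)).tendsto_prod_nat
  apply le_of_tendsto ht
  filter_upwards [Filter.eventually_ge_atTop α] with m hm
  obtain ⟨k, rfl⟩ := le_iff_exists_add.1 hm
  rw [Finset.prod_range_add]
  have hle1 : (∏ i ∈ Finset.range k, (1 - ρ ^ (2 * (α + i + 1)))) ≤ 1 := by
    apply Finset.prod_le_one
    · intro i _
      have := he_pow_lt_one hρ (2 * (α + i + 1)) (by positivity)
      linarith
    · intro i _
      have : (0:ℝ) < ρ ^ (2 * (α + i + 1)) := by positivity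
      linarith
  have hD := heD_pos' hρ α
  nlinarith [hD, hle1]

lemma heTsum_ge_one {ρ y : ℝ} (hρ : ρ ∈ Set.Ioo (0:ℝ) 1) (hy : 0 ≤ y) :
    1 ≤ ∑' α, heA ρ y α := by
  have := Summable.le_tsum (heA_summable hρ hy) 0 (fun i _ => heA_nonneg hρ hy i)
  rwa [heA_zero] at this

lemma heTsum_le {ρ y : ℝ} (hρ : ρ ∈ Set.Ioo (0:ℝ) 1) (hy0 : 0 ≤ y) (hy1 : y ≤ 1/2) :
    ∑' α, heA ρ y α ≤ 1 + 2 * y / ∏' i : ℕ, (1 - ρ ^ (2 * (i + 1))) := by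
  set C := ∏' i : ℕ, (1 - ρ ^ (2 * (i + 1))) with hC
  have hCpos : 0 < C := heC_pos hρ
  have h1 : (0:ℝ) < ρ := hρ.1
  have hy2 : y < 1 := by linarith
  have hterm : ∀ α : ℕ, heA ρ y (α + 1) ≤ (y / C) * y ^ α := by
    intro α
    have hD := heD_pos' hρ (α + 1)
    have hCD := heC_le_D hρ (α + 1)
    have hnum : ρ ^ ((α + 1) * ((α + 1) - 1)) * y ^ (α + 1) ≤ y ^ (α + 1) := by
      have : ρ ^ ((α + 1) * ((α + 1) - 1)) ≤ 1 := pow_le_one₀ h1.le hρ.2.le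
      nlinarith [pow_nonneg hy0 (α + 1)]
    have : heA ρ y (α + 1) ≤ y ^ (α + 1) / C := by
      unfold heA
      exact div_le_div₀ (by positivity) hnum hCpos hCD
    calc heA ρ y (α + 1) ≤ y ^ (α + 1) / C := this
      _ = (y / C) * y ^ α := by rw [pow_succ]; ring
  have hs := heA_summable hρ hy0
  have hs1 : Summable fun α => heA ρ y (α + 1) := (summable_nat_add_iff 1).2 hs
  have hgs : Summable fun α : ℕ => (y / C) * y ^ α :=
    (summable_geometric_of_lt_one hy0 hy2).mul_left _
  have e1 : ∑' α, heA ρ y α = 1 + ∑' α, heA ρ y (α + 1) := by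
    rw [Summable.tsum_eq_zero_add hs, heA_zero]
  have e2 : ∑' α : ℕ, (y / C) * y ^ α = (y / C) * (1 - y)⁻¹ := by
    rw [tsum_mul_left, tsum_geometric_of_lt_one hy0 hy2]
  have hle : ∑' α, heA ρ y (α + 1) ≤ (y / C) * (1 - y)⁻¹ := by
    rw [← e2]
    exact Summable.tsum_le_tsum hterm hs1 hgs
  have hinv : (1 - y)⁻¹ ≤ 2 := by
    rw [inv_le_comm₀ (by linarith) (by norm_num)]
    linarith
  have hyC : 0 ≤ y / C := div_nonneg hy0 hCpos.le
  have : (y / C) * (1 - y)⁻¹ ≤ (y / C) * 2 := by nlinarith [inv_nonneg.2 (by linarith : (0:ℝ) ≤ 1 - y)]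
  rw [e1]
  have : 2 * y / C = (y / C) * 2 := by ring
  linarith [hle, this ▸ le_refl (2 * y / C)]

lemma heTendsto_one {ρ x : ℝ} (hρ : ρ ∈ Set.Ioo (0:ℝ) 1) (hx : 0 ≤ x) :
    Filter.Tendsto (fun n : ℕ => ∑' α, heA ρ (ρ ^ (2 * n) * x) α) Filter.atTop (𝓝 1) := by
  have h1 : (0:ℝ) < ρ := hρ.1
  have h2 : ρ ^ 2 < 1 := he_pow_lt_one hρ 2 (by norm_num)
  set C := ∏' i : ℕ, (1 - ρ ^ (2 * (i + 1))) with hC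
  have hCpos : 0 < C := heC_pos hρ
  have hy : ∀ n : ℕ, 0 ≤ ρ ^ (2 * n) * x := fun n => mul_nonneg (by positivity) hx
  have hx0 : Filter.Tendsto (fun n : ℕ => ρ ^ (2 * n) * x) Filter.atTop (𝓝 0) := by
    have := (tendsto_pow_atTop_nhds_zero_of_lt_one (by positivity) h2).mul_const x
    simpa [pow_mul, zero_mul] using this
  have hupper : Filter.Tendsto (fun n : ℕ => 1 + 2 * (ρ ^ (2 * n) * x) / C)
      Filter.atTop (𝓝 1) := by
    have := ((hx0.const_mul 2).div_const C).const_add 1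
    simpa using this
  apply tendsto_of_tendsto_of_tendsto_of_le_of_le' tendsto_const_nhds hupper
  · exact Filter.Eventually.of_forall fun n => heTsum_ge_one hρ (hy n)
  · filter_upwards [hx0.eventually_le_const (show (0:ℝ) < 1/2 by norm_num)] with n hn
    exact heTsum_le hρ (hy n) hn

lemma heKey {ρ x : ℝ} (hρ : ρ ∈ Set.Ioo (0:ℝ) 1) (hx : 0 ≤ x) :
    ∑' α, heA ρ x α = ∏' i : ℕ, (1 + x * ρ ^ (2 * i)) := by
  have h1 : (0:ℝ) < ρ := hρ.1
  have hpos : ∀ i : ℕ, 0 < 1 + x * ρ ^ (2 * i) := fun i => by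
    have : (0:ℝ) < ρ ^ (2 * i) := by positivity
    nlinarith
  have hP := heHasProd_exp hpos (heLogSummable_one_add hρ hx)
  have hP' : HasProd (fun i : ℕ => 1 + x * ρ ^ (2 * i)) (∏' i : ℕ, (1 + x * ρ ^ (2 * i))) :=
    hP.tprod_eq ▸ hP
  have htP := hP'.tendsto_prod_nat
  have ha := htP.mul (heTendsto_one hρ hx)
  have hb : (fun n : ℕ => (∏ i ∈ Finset.range n, (1 + x * ρ ^ (2 * i)))
      * ∑' α, heA ρ (ρ ^ (2 * n) * x) α) = fun _ : ℕ => ∑' α, heA ρ x α :=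
    funext fun n => (heF_iter hρ hx n).symm
  rw [hb] at ha
  simpa using (tendsto_nhds_unique ha tendsto_const_nhds).symm

lemma heT_pos {ρ x : ℝ} (hρ : ρ ∈ Set.Ioo (0:ℝ) 1) (hx : 0 ≤ x) :
    0 < ∏' i : ℕ, (1 + x * ρ ^ (2 * i)) := by
  have h1 : (0:ℝ) < ρ := hρ.1
  have hpos : ∀ i : ℕ, 0 < 1 + x * ρ ^ (2 * i) := fun i => by
    have : (0:ℝ) < ρ ^ (2 * i) := by positivity
    nlinarith
  rw [(heHasProd_exp hpos (heLogSummable_one_add hρ hx)).tprod_eq]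
  exact Real.exp_pos _

end HeineAux

/-- `He(θρ, ρ²)` is a well-defined probability distribution on `ℕ`: each weight
is strictly positive and the weights sum to `1`. -/
theorem heinePdf_isProbability (θ ρ : ℝ) (hθ : 0 < θ) (hρ : ρ ∈ Set.Ioo (0 : ℝ) 1) :
    (∀ α : ℕ, 0 < heinePdf θ ρ α) ∧ ∑' α : ℕ, heinePdf θ ρ α = 1 := by
  have h1 : (0:ℝ) < ρ := hρ.1
  set x := θ * ρ with hxdef
  have hx : 0 < x := mul_pos hθ h1
  have efac : (∏' i : ℕ, (1 + θ * ρ ^ (2 * i + 1))) = ∏' i : ℕ, (1 + x * ρ ^ (2 * i)) :=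
    tprod_congr fun i => by rw [hxdef, pow_succ]; ring
  have hT : 0 < ∏' i : ℕ, (1 + x * ρ ^ (2 * i)) := heT_pos hρ hx.le
  have hpdf : ∀ α : ℕ, heinePdf θ ρ α
      = (1 / ∏' i : ℕ, (1 + x * ρ ^ (2 * i))) * heA ρ x α := by
    intro α
    rw [heinePdf, heA, efac]
    ring
  constructor
  · intro α
    rw [hpdf α]
    exact mul_pos (by positivity) (heA_pos hρ hx α)
  · have := heKey hρ hx.le
    calc ∑' α : ℕ, heinePdf θ ρ α
        = ∑' α : ℕ, (1 / ∏' i : ℕ, (1 + x * ρ ^ (2 * i))) * heA ρ x α := tsum_congr hpdf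
      _ = (1 / ∏' i : ℕ, (1 + x * ρ ^ (2 * i))) * ∑' α, heA ρ x α := tsum_mul_left
      _ = 1 := by rw [this]; field_simp
end
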